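/- arXiv:1601.08169 — 7 statements merged into one kernel-verified Lean document; each statement's English description precedes it below -/
import Mathlib

section
/- Let M ≥ 1 be an integer and let x_1, …, x_M be nonnegative real numbers with x = x_1 + ⋯ + x_M. Then 0 ≤ exp(x) − ∏_{i=1}^{M} (1 + x_i) ≤ x · exp(x) · max_{1≤i≤M} x_i. -/
lemma exp_sub_one_sub_le (t : ℝ) (ht : 0 ≤ t) :
    Real.exp t - (1 + t) ≤ t ^ 2 * Real.exp t := by
  have h1 : Real.exp t - 1 ≤ t * Real.exp t := by
    have h := Real.add_one_le_exp (-t)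
    have hpos := Real.exp_pos t
    have hmul : Real.exp (-t) * Real.exp t = 1 := by
      rw [← Real.exp_add]; simp
    nlinarith
  nlinarith [Real.add_one_le_exp t]

lemma key (ι : Type*) (x : ι → ℝ) (hx : ∀ i, 0 ≤ x i) (s : Finset ι) :
    (∏ i ∈ s, (1 + x i)) ≤ Real.exp (∑ i ∈ s, x i) ∧
      Real.exp (∑ i ∈ s, x i) - ∏ i ∈ s, (1 + x i) ≤
        (∑ i ∈ s, (x i) ^ 2) * Real.exp (∑ i ∈ s, x i) := by
  classical
  induction s using Finset.cons_induction with
  | empty => simp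
  | cons a s ha ih =>
    obtain ⟨ih1, ih2⟩ := ih
    rw [Finset.prod_cons, Finset.sum_cons, Finset.sum_cons]
    have hP : 0 ≤ ∏ i ∈ s, (1 + x i) :=
      Finset.prod_nonneg fun i _ => by linarith [hx i]
    have hE := (Real.exp_pos (∑ i ∈ s, x i)).le
    have hea := (Real.exp_pos (x a)).le
    have hxa := hx a
    have h1 : (1 + x a) * ∏ i ∈ s, (1 + x i) ≤ Real.exp (x a + ∑ i ∈ s, x i) := by
      rw [Real.exp_add]
      exact mul_le_mul (by linarith [Real.add_one_le_exp (x a)]) ih1 hP hea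
    refine ⟨h1, ?_⟩
    have key1 := exp_sub_one_sub_le (x a) hxa
    have hsq : 0 ≤ ∑ i ∈ s, (x i) ^ 2 :=
      Finset.sum_nonneg fun i _ => sq_nonneg _
    rw [Real.exp_add]
    have hnn : 0 ≤ Real.exp (x a) - (1 + x a) := by
      linarith [Real.add_one_le_exp (x a)]
    nlinarith [mul_le_mul_of_nonneg_left ih2 hea,
      mul_le_mul_of_nonneg_right key1 hE,
      mul_le_mul_of_nonneg_left ih1 hnn]

/-- Generalized Euler estimate (Proposition `Eulerv2`):
for nonnegative reals `x₁, …, x_M` with sum `x`,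
`0 ≤ exp x − ∏ (1 + xᵢ) ≤ x · exp x · max_i xᵢ`. -/
theorem euler_generalized (M : ℕ) (hM : 1 ≤ M) (x : Fin M → ℝ)
    (hx : ∀ i, 0 ≤ x i) :
    0 ≤ Real.exp (∑ i, x i) - ∏ i, (1 + x i) ∧
      Real.exp (∑ i, x i) - ∏ i, (1 + x i) ≤
        (∑ i, x i) * Real.exp (∑ i, x i) *
          Finset.univ.sup' ⟨⟨0, hM⟩, Finset.mem_univ _⟩ x := by
  obtain ⟨h1, h2⟩ := key (Fin M) x hx Finset.univ
  constructor
  · linarith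
  · set m := Finset.univ.sup' ⟨⟨0, hM⟩, Finset.mem_univ _⟩ x with hm
    have hle : ∀ i, x i ≤ m := fun i => Finset.le_sup' x (Finset.mem_univ i)
    have hsq : ∑ i, (x i) ^ 2 ≤ (∑ i, x i) * m := by
      rw [Finset.sum_mul]
      refine Finset.sum_le_sum fun i _ => ?_
      have := hx i
      nlinarith [hle i]
    have hE := (Real.exp_pos (∑ i, x i)).le
    calc Real.exp (∑ i, x i) - ∏ i, (1 + x i)
        ≤ (∑ i, (x i) ^ 2) * Real.exp (∑ i, x i) := h2
      _ ≤ ((∑ i, x i) * m) * Real.exp (∑ i, x i) :=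
          mul_le_mul_of_nonneg_right hsq hE
      _ = (∑ i, x i) * Real.exp (∑ i, x i) * m := by ring
end

section
/- Let A be an algebra over ℝ (or over ℚ), let a_1, …, a_L ∈ A and let D ∈ ℕ. Then ∏_{i=1}^{L} ( Σ_{d=0}^{D} a_i^d / d! ), with factors multiplied in order i = 1,…,L, equals the sum over all weakly increasing tuples 𝐢 = (i_1 ≤ i_2 ≤ ⋯ ≤ i_m) with values in {1,…,L} in which each value occurs at most D times (all lengths m ≥ 0, the empty tuple contributing 1) of (1/𝐢!) · a_{i_1} · a_{i_2} ⋯ a_{i_m}, where 𝐢! denotes the product of the factorials of the multiplicities of the distinct values occurring in 𝐢. -/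
open Finset

/-- The canonical weakly increasing list with multiplicity vector `c`. -/
private def sigList {L : ℕ} (c : Fin L → ℕ) : List (Fin L) :=
  (List.finRange L).flatMap fun i => List.replicate (c i) i

private lemma sigList_length {L : ℕ} (c : Fin L → ℕ) :
    (sigList c).length = ∑ i, c i := by
  simp [sigList, List.length_flatMap, Fin.sum_univ_def, Function.comp_def]

private lemma sigList_count {L : ℕ} (c : Fin L → ℕ) (v : Fin L) :
    (sigList c).count v = c v := by
  rw [sigList, List.count_flatMap, ← Fin.sum_univ_def]
  simp only [Function.comp_apply, List.count_replicate, beq_iff_eq]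
  simp

private lemma flatMap_replicate_sorted {L : ℕ} (c : Fin L → ℕ) :
    ∀ l : List (Fin L), l.Pairwise (· ≤ ·) →
      (l.flatMap fun i => List.replicate (c i) i).Pairwise (· ≤ ·)
  | [], _ => by simp
  | i :: l, h => by
    rw [List.flatMap_cons, List.pairwise_append]
    refine ⟨List.pairwise_replicate.2 (Or.inr le_rfl),
      flatMap_replicate_sorted c l h.of_cons, ?_⟩
    intro x hx y hy
    rw [List.eq_of_mem_replicate hx]
    obtain ⟨j, hj, hyj⟩ := List.mem_flatMap.1 hy
    rw [List.eq_of_mem_replicate hyj]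
    exact List.rel_of_pairwise_cons h hj

private lemma sigList_sorted {L : ℕ} (c : Fin L → ℕ) :
    (sigList c).Pairwise (· ≤ ·) :=
  flatMap_replicate_sorted c _ (List.pairwise_le_finRange L)

private lemma flatMap_replicate_prod {A : Type*} [Monoid A] {L : ℕ} (c : Fin L → ℕ)
    (a : Fin L → A) :
    ∀ l : List (Fin L),
      ((l.flatMap fun i => List.replicate (c i) i).map a).prod
        = (l.map fun i => a i ^ c i).prod
  | [] => by simp
  | i :: l => by
    rw [List.flatMap_cons, List.map_append, List.prod_append, List.map_cons,
      List.prod_cons, List.map_replicate, List.prod_replicate,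
      flatMap_replicate_prod c a l]

private lemma sigList_prod {A : Type*} [Monoid A] {L : ℕ} (c : Fin L → ℕ) (a : Fin L → A) :
    ((sigList c).map a).prod = ((List.finRange L).map fun i => a i ^ c i).prod :=
  flatMap_replicate_prod c a _

private lemma card_filter_eq_count {m L : ℕ} (f : Fin m → Fin L) (v : Fin L) :
    (Finset.univ.filter fun r => f r = v).card = (List.ofFn f).count v := by
  induction m with
  | zero => simp
  | succ n ih =>
    rw [List.ofFn_succ, List.count_cons, ← ih (fun i => f i.succ),
      Finset.card_filter, Fin.sum_univ_succ, ← Finset.card_filter]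
    simp only [beq_iff_eq, Nat.add_comm]

private lemma sigma_mk_get {α : Type*} :
    ∀ (l : List α) (m : ℕ) (ι : Fin m → α), l = List.ofFn ι →
      (⟨l.length, l.get⟩ : Σ n, Fin n → α) = ⟨m, ι⟩ := by
  rintro l m ι rfl
  refine Sigma.ext (List.length_ofFn (f := ι)) ((Fin.heq_fun_iff (List.length_ofFn (f := ι))).2 fun i => ?_)
  show (List.ofFn ι).get i = ι ⟨i.val, _⟩
  rw [List.get_ofFn]
  rfl

private lemma lhs_eq {A : Type*} [Ring A] [Algebra ℚ A] (D : ℕ) :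
    ∀ (L : ℕ) (a : Fin L → A),
    ((List.finRange L).map fun i =>
        ∑ d ∈ Finset.range (D + 1), ((Nat.factorial d : ℚ)⁻¹) • a i ^ d).prod
      = ∑ c ∈ Fintype.piFinset (fun _ : Fin L => Finset.range (D + 1)),
          ((∏ i, ((c i).factorial : ℚ))⁻¹) •
            ((List.finRange L).map fun i => a i ^ c i).prod
  | 0, a => by
    rw [show List.finRange 0 = [] from rfl, List.map_nil, List.prod_nil]
    have huniv : Fintype.piFinset (fun _ : Fin 0 => Finset.range (D + 1)) = Finset.univ :=
      Finset.eq_univ_of_forall fun x => Fintype.mem_piFinset.2 fun i => i.elim0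
    rw [huniv, Finset.univ_unique, Finset.sum_singleton]
    simp only [Finset.univ_eq_empty, Finset.prod_empty, inv_one, one_smul]
    rfl
  | L + 1, a => by
    have hsplit : ∀ T : (Fin (L + 1) → ℕ) → A,
        ∑ c ∈ Fintype.piFinset (fun _ : Fin (L + 1) => Finset.range (D + 1)), T c
          = ∑ p ∈ (Finset.range (D + 1)) ×ˢ
              Fintype.piFinset (fun _ : Fin L => Finset.range (D + 1)),
              T (Fin.cons p.1 p.2) := by
      intro T
      refine Finset.sum_nbij' (fun c => (c 0, fun i => c i.succ))
        (fun p => Fin.cons p.1 p.2) ?_ ?_ ?_ ?_ ?_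
      · intro c hc
        simp only [Fintype.mem_piFinset] at hc
        simp [Finset.mem_product, Fintype.mem_piFinset, hc 0, fun i : Fin L => hc i.succ]
      · intro p hp
        simp only [Finset.mem_product, Fintype.mem_piFinset] at hp
        simp only [Fintype.mem_piFinset]
        intro i
        induction i using Fin.cases with
        | zero => simpa using hp.1
        | succ j => simpa using hp.2 j
      · intro c _
        funext i
        induction i using Fin.cases <;> simp
      · intro p _
        simp
      · intro c _
        exact congrArg T (funext fun i => by
          induction i using Fin.cases <;> simp).symm
    rw [List.finRange_succ, List.map_cons, List.prod_cons, List.map_map]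
    rw [show ((fun i => ∑ d ∈ Finset.range (D + 1),
          ((Nat.factorial d : ℚ)⁻¹) • a i ^ d) ∘ Fin.succ)
        = fun i : Fin L => ∑ d ∈ Finset.range (D + 1),
            ((Nat.factorial d : ℚ)⁻¹) • (fun j : Fin L => a j.succ) i ^ d from rfl]
    rw [lhs_eq D L (fun j => a j.succ), Finset.sum_mul_sum, hsplit, Finset.sum_product]
    refine Finset.sum_congr rfl fun d _ => Finset.sum_congr rfl fun c _ => ?_
    rw [smul_mul_smul_comm]
    congr 1
    · rw [Fin.prod_univ_succ]
      simp [mul_inv, mul_comm]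
    · simp [List.finRange_succ, Function.comp_def]

open Classical Finset in
/-- Explicit sum formula for the order-`D` discrete signature
(Proposition `sighigh`, part (a)): in a `ℚ`-algebra,
`∏_{i=1}^{L} (∑_{d=0}^{D} aᵢ^d / d!)` (factors multiplied in order) equals the sum
over all weakly increasing tuples `𝐢` with values in `{1,…,L}` in which every value
occurs at most `D` times, of `(1/𝐢!) · a_{i₁} ⋯ a_{i_m}`, where `𝐢!` is the product
of the factorials of the multiplicities of the values of `𝐢`. -/
theorem higher_order_signature_sum {A : Type*} [Ring A] [Algebra ℚ A]
    (L D : ℕ) (a : Fin L → A) :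
    ((List.finRange L).map (fun i =>
        ∑ d ∈ Finset.range (D + 1), ((Nat.factorial d : ℚ)⁻¹) • a i ^ d)).prod
      = ∑ m ∈ Finset.range (L * D + 1),
          ∑ ι ∈ Finset.univ.filter (fun ι : Fin m → Fin L =>
              Monotone ι ∧
                ∀ v : Fin L, (Finset.univ.filter (fun r => ι r = v)).card ≤ D),
            ((∏ v : Fin L,
                (Nat.factorial ((Finset.univ.filter (fun r => ι r = v)).card) : ℚ))⁻¹) •
              (List.ofFn (fun r : Fin m => a (ι r))).prod := by
  rw [lhs_eq, Finset.sum_sigma']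
  refine Finset.sum_nbij' (fun c => ⟨(sigList c).length, (sigList c).get⟩)
    (fun x => fun v => (Finset.univ.filter fun r => x.2 r = v).card) ?_ ?_ ?_ ?_ ?_
  · intro c hc
    simp only [Fintype.mem_piFinset, Finset.mem_range, Nat.lt_succ_iff] at hc
    have hcount : ∀ v, (Finset.univ.filter fun r => (sigList c).get r = v).card = c v := by
      intro v
      rw [card_filter_eq_count, List.ofFn_get, sigList_count]
    have hmono : Monotone (sigList c).get := by
      rw [← List.sortedLE_ofFn_iff, List.ofFn_get, List.sortedLE_iff_pairwise]
      exact sigList_sorted c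
    simp only [Finset.mem_sigma, Finset.mem_range, Finset.mem_filter, Finset.mem_univ,
      true_and, Nat.lt_succ_iff]
    refine ⟨?_, hmono, fun v => (hcount v).le.trans (hc v)⟩
    · rw [sigList_length]
      calc ∑ i, c i ≤ ∑ _i : Fin L, D := Finset.sum_le_sum fun i _ => hc i
        _ = L * D := by simp [mul_comm]
  · rintro ⟨m, ι⟩ hx
    simp only [Finset.mem_sigma, Finset.mem_filter] at hx
    simp only [Fintype.mem_piFinset, Finset.mem_range, Nat.lt_succ_iff]
    exact fun v => hx.2.2.2 v
  · intro c hc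
    funext v
    show (Finset.univ.filter fun r => (sigList c).get r = v).card = c v
    rw [card_filter_eq_count, List.ofFn_get, sigList_count]
  · rintro ⟨m, ι⟩ hx
    simp only [Finset.mem_sigma, Finset.mem_filter] at hx
    have hmono : Monotone ι := hx.2.2.1
    have hkey : sigList (fun v => (Finset.univ.filter fun r => ι r = v).card)
        = List.ofFn ι := by
      refine List.Perm.eq_of_pairwise' (sigList_sorted _)
        (List.sortedLE_iff_pairwise.1 (List.sortedLE_ofFn_iff.2 hmono)) (List.perm_iff_count.2 fun v => ?_)
      rw [sigList_count, card_filter_eq_count]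
    exact sigma_mk_get _ m ι hkey
  · intro c hc
    have hcount : ∀ v, (Finset.univ.filter fun r => (sigList c).get r = v).card = c v := by
      intro v
      rw [card_filter_eq_count, List.ofFn_get, sigList_count]
    show ((∏ i, ((c i).factorial : ℚ))⁻¹) • ((List.finRange L).map fun i => a i ^ c i).prod
      = ((∏ v : Fin L,
            (((Finset.univ.filter fun r => (sigList c).get r = v).card).factorial : ℚ))⁻¹) •
          (List.ofFn fun r => a ((sigList c).get r)).prod
    rw [show (fun r => a ((sigList c).get r)) = a ∘ (sigList c).get from rfl,
      ← List.map_ofFn, List.ofFn_get, sigList_prod]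
    congr 2
    exact (Finset.prod_congr rfl fun v _ => by rw [hcount v]).symm
end

section
/- Let L, L', M ≥ 1 be integers and let G : {1,…,L} × {1,…,L'} → ℝ. Define real numbers A_m(i,j) recursively by A_1(i,j) = G(i,j) and, for 2 ≤ m ≤ M, A_m(i,j) = G(i,j) · ( 1 + Σ_{i' > i} Σ_{j' > j} A_{m−1}(i',j') ), the inner sums ranging over i < i' ≤ L and j < j' ≤ L'. Then 1 + Σ_{i=1}^{L} Σ_{j=1}^{L'} A_M(i,j) = Σ_{m=0}^{M} Σ_{𝐢} Σ_{𝐣} ∏_{r=1}^{m} G(i_r, j_r), where the inner sums range over all strictly increasing tuples 𝐢 = (i_1 < ⋯ < i_m) in {1,…,L} and 𝐣 = (j_1 < ⋯ < j_m) in {1,…,L'} of the same length m (the m = 0 term contributing 1). -/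
open Classical Finset

lemma strictMono_cons_iff' {L m : ℕ} (i : Fin L) (ι : Fin m → Fin L) :
    StrictMono (Fin.cons i ι : Fin (m+1) → Fin L) ↔ StrictMono ι ∧ ∀ r, i < ι r := by
  constructor
  · intro h
    refine ⟨fun a b hab => ?_, fun r => ?_⟩
    · have := h (a := a.succ) (b := b.succ) (by simpa using hab)
      simpa using this
    · have := h (a := 0) (b := r.succ) (Fin.succ_pos r)
      simpa using this
  · rintro ⟨h1, h2⟩ a b hab
    induction b using Fin.cases with
    | zero => exact absurd hab (by simp [Fin.not_lt, Fin.zero_le])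
    | succ b' =>
      induction a using Fin.cases with
      | zero => simpa using h2 b'
      | succ a' =>
        have hab' : a' < b' := by simpa using hab
        simpa using h1 hab'

lemma peel_sum {L m : ℕ} (p : Fin L → Prop) (hp : ∀ ⦃a b : Fin L⦄, p a → a < b → p b)
    (f : (Fin (m+1) → Fin L) → ℝ) :
    ∑ ι ∈ univ.filter (fun ι : Fin (m+1) → Fin L => StrictMono ι ∧ ∀ r, p (ι r)), f ι
    = ∑ i' ∈ univ.filter p,
        ∑ ι' ∈ univ.filter (fun ι' : Fin m → Fin L => StrictMono ι' ∧ ∀ r, i' < ι' r),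
          f (Fin.cons i' ι') := by
  rw [Finset.sum_sigma']
  refine Finset.sum_nbij' (i := fun ι => (⟨ι 0, Fin.tail ι⟩ : Σ _ : Fin L, Fin m → Fin L))
    (j := fun x => Fin.cons x.1 x.2) ?_ ?_ ?_ ?_ ?_
  · rintro ι hι
    simp only [mem_filter, mem_univ, true_and, mem_sigma] at hι ⊢
    obtain ⟨h1, h2⟩ := hι
    refine ⟨h2 0, ?_, fun r => ?_⟩
    · exact h1.comp (Fin.strictMono_succ)
    · exact h1 (Fin.succ_pos r)
  · rintro ⟨i', ι'⟩ hx
    simp only [mem_sigma, mem_filter, mem_univ, true_and] at hx ⊢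
    obtain ⟨h0, h1, h2⟩ := hx
    refine ⟨(strictMono_cons_iff' i' ι').2 ⟨h1, h2⟩, fun r => ?_⟩
    refine Fin.cases ?_ ?_ r
    · simpa using h0
    · intro r'; simpa using hp h0 (h2 r')
  · intro ι hι; simp [Fin.cons_self_tail]
  · rintro ⟨i', ι'⟩ hx
    simp [Fin.tail_cons]
  · intro ι hι; rw [Fin.cons_self_tail]

lemma peel_sum_lt {L m : ℕ} (x : Fin L) (f : (Fin (m+1) → Fin L) → ℝ) :
    ∑ ι ∈ univ.filter (fun ι : Fin (m+1) → Fin L => StrictMono ι ∧ ∀ r, x < ι r), f ι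
    = ∑ i' ∈ univ.filter (fun i' => x < i'),
        ∑ ι' ∈ univ.filter (fun ι' : Fin m → Fin L => StrictMono ι' ∧ ∀ r, i' < ι' r),
          f (Fin.cons i' ι') := by
  have h := peel_sum (m := m) (fun i' : Fin L => x < i') (fun a b ha hab => ha.trans hab) f
  convert h using 2 <;> congr

lemma peel_sum_top {L m : ℕ} (f : (Fin (m+1) → Fin L) → ℝ) :
    ∑ ι ∈ univ.filter (fun ι : Fin (m+1) → Fin L => StrictMono ι), f ι
    = ∑ i' : Fin L,
        ∑ ι' ∈ univ.filter (fun ι' : Fin m → Fin L => StrictMono ι' ∧ ∀ r, i' < ι' r),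
          f (Fin.cons i' ι') := by
  have h := peel_sum (m := m) (fun _ : Fin L => True) (fun a b _ _ => trivial) f
  simp only [Finset.filter_true] at h
  rw [← h]
  refine Finset.sum_congr ?_ (fun _ _ => rfl)
  ext ι
  simp


noncomputable def Psum (L L' : ℕ) (G : Fin L → Fin L' → ℝ) (m : ℕ) (i : Fin L) (j : Fin L') : ℝ :=
  ∑ ι ∈ univ.filter (fun ι : Fin m → Fin L => StrictMono ι ∧ ∀ r, i < ι r),
    ∑ κ ∈ univ.filter (fun κ : Fin m → Fin L' => StrictMono κ ∧ ∀ r, j < κ r),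
      ∏ r, G (ι r) (κ r)

lemma Psum_zero {L L' : ℕ} (G : Fin L → Fin L' → ℝ) (i : Fin L) (j : Fin L') :
    Psum L L' G 0 i j = 1 := by
  unfold Psum
  rw [Finset.filter_true_of_mem (fun ι _ => ⟨fun a b _ => a.elim0, fun r => r.elim0⟩),
      Finset.filter_true_of_mem (fun κ _ => ⟨fun a b _ => a.elim0, fun r => r.elim0⟩)]
  simp

lemma Psum_succ {L L' : ℕ} (G : Fin L → Fin L' → ℝ) (m : ℕ) (i : Fin L) (j : Fin L') :
    Psum L L' G (m+1) i j
      = ∑ i' ∈ univ.filter (fun i' => i < i'),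
          ∑ j' ∈ univ.filter (fun j' => j < j'), G i' j' * Psum L L' G m i' j' := by
  unfold Psum
  rw [peel_sum_lt i
    (f := fun ι => ∑ κ ∈ univ.filter (fun κ : Fin (m+1) → Fin L' => StrictMono κ ∧ ∀ r, j < κ r),
      ∏ r, G (ι r) (κ r))]
  refine Finset.sum_congr rfl fun i' _ => ?_
  have step : ∀ ι' : Fin m → Fin L,
      (∑ κ ∈ univ.filter (fun κ : Fin (m+1) → Fin L' => StrictMono κ ∧ ∀ r, j < κ r),
        ∏ r, G ((Fin.cons i' ι' : Fin (m+1) → Fin L) r) (κ r))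
      = ∑ j' ∈ univ.filter (fun j' => j < j'),
          ∑ κ' ∈ univ.filter (fun κ' : Fin m → Fin L' => StrictMono κ' ∧ ∀ r, j' < κ' r),
            G i' j' * ∏ r, G (ι' r) (κ' r) := by
    intro ι'
    rw [peel_sum_lt j (f := fun κ => ∏ r, G ((Fin.cons i' ι' : Fin (m+1) → Fin L) r) (κ r))]
    refine Finset.sum_congr rfl fun j' _ => Finset.sum_congr rfl fun κ' _ => ?_
    rw [Fin.prod_univ_succ]
    simp
  simp only [step]
  rw [Finset.sum_comm]
  refine Finset.sum_congr rfl fun j' _ => ?_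
  rw [Finset.mul_sum]
  refine Finset.sum_congr rfl fun ι' _ => ?_
  rw [Finset.mul_sum]

lemma Q_succ {L L' : ℕ} (G : Fin L → Fin L' → ℝ) (m : ℕ) :
    (∑ ι ∈ univ.filter (fun ι : Fin (m+1) → Fin L => StrictMono ι),
      ∑ κ ∈ univ.filter (fun κ : Fin (m+1) → Fin L' => StrictMono κ),
        ∏ r, G (ι r) (κ r))
    = ∑ i, ∑ j, G i j * Psum L L' G m i j := by
  unfold Psum
  rw [peel_sum_top (f := fun ι => ∑ κ ∈ univ.filter
      (fun κ : Fin (m+1) → Fin L' => StrictMono κ), ∏ r, G (ι r) (κ r))]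
  refine Finset.sum_congr rfl fun i' _ => ?_
  have step : ∀ ι' : Fin m → Fin L,
      (∑ κ ∈ univ.filter (fun κ : Fin (m+1) → Fin L' => StrictMono κ),
        ∏ r, G ((Fin.cons i' ι' : Fin (m+1) → Fin L) r) (κ r))
      = ∑ j' : Fin L',
          ∑ κ' ∈ univ.filter (fun κ' : Fin m → Fin L' => StrictMono κ' ∧ ∀ r, j' < κ' r),
            G i' j' * ∏ r, G (ι' r) (κ' r) := by
    intro ι'
    rw [peel_sum_top (f := fun κ => ∏ r, G ((Fin.cons i' ι' : Fin (m+1) → Fin L) r) (κ r))]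
    refine Finset.sum_congr rfl fun j' _ => Finset.sum_congr rfl fun κ' _ => ?_
    rw [Fin.prod_univ_succ]
    simp
  simp only [step]
  rw [Finset.sum_comm]
  refine Finset.sum_congr rfl fun j' _ => ?_
  rw [Finset.mul_sum]
  refine Finset.sum_congr rfl fun ι' _ => ?_
  rw [Finset.mul_sum]

lemma Q_zero {L L' : ℕ} (G : Fin L → Fin L' → ℝ) :
    (∑ ι ∈ univ.filter (fun ι : Fin 0 → Fin L => StrictMono ι),
      ∑ κ ∈ univ.filter (fun κ : Fin 0 → Fin L' => StrictMono κ),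
        ∏ r, G (ι r) (κ r)) = 1 := by
  have h1 : (univ.filter (fun ι : Fin 0 → Fin L => StrictMono ι)) = univ :=
    Finset.filter_true_of_mem (fun ι _ => fun a b _ => a.elim0)
  have h2 : (univ.filter (fun κ : Fin 0 → Fin L' => StrictMono κ)) = univ :=
    Finset.filter_true_of_mem (fun κ _ => fun a b _ => a.elim0)
  rw [h1, h2]
  simp

open Classical Finset in
/-- Correctness of the Horner-type dynamic-programming recursion for the truncated
discretized signature kernel (Proposition `sigrecursion`, (ii) ⟺ (iv)):
for any Gram function `G` and `A` defined by `A 1 i j = G i j` and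
`A m i j = G i j * (1 + ∑_{i' > i} ∑_{j' > j} A (m-1) i' j')` for `2 ≤ m ≤ M`,
one has `1 + ∑_{i,j} A M i j = ∑_{m=0}^{M} ∑_{𝐢,𝐣 strictly increasing, |𝐢|=|𝐣|=m}
∏_r G (i_r) (j_r)`. -/
theorem horner_recursion_signature_kernel (L L' M : ℕ)
    (hL : 1 ≤ L) (hL' : 1 ≤ L') (hM : 1 ≤ M)
    (G : Fin L → Fin L' → ℝ) (A : ℕ → Fin L → Fin L' → ℝ)
    (hA1 : ∀ i j, A 1 i j = G i j)
    (hArec : ∀ m, 2 ≤ m → m ≤ M → ∀ i j,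
      A m i j = G i j *
        (1 + ∑ i' ∈ Finset.univ.filter (fun i' => i < i'),
            ∑ j' ∈ Finset.univ.filter (fun j' => j < j'), A (m - 1) i' j')) :
    1 + ∑ i, ∑ j, A M i j
      = ∑ m ∈ Finset.range (M + 1),
          ∑ ι ∈ Finset.univ.filter (fun ι : Fin m → Fin L => StrictMono ι),
            ∑ κ ∈ Finset.univ.filter (fun κ : Fin m → Fin L' => StrictMono κ),
              ∏ r, G (ι r) (κ r) := by
  have swap : ∀ (s : Finset (Fin L)) (t : Finset (Fin L')) (g : Fin L → Fin L' → ℕ → ℝ) (n : ℕ),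
      (∑ i' ∈ s, ∑ j' ∈ t, ∑ k ∈ Finset.range n, g i' j' k)
      = ∑ k ∈ Finset.range n, ∑ i' ∈ s, ∑ j' ∈ t, g i' j' k := by
    intro s t g n
    calc (∑ i' ∈ s, ∑ j' ∈ t, ∑ k ∈ Finset.range n, g i' j' k)
        = ∑ i' ∈ s, ∑ k ∈ Finset.range n, ∑ j' ∈ t, g i' j' k :=
          Finset.sum_congr rfl fun i' _ => Finset.sum_comm
      _ = _ := Finset.sum_comm
  have hAeq : ∀ m, 1 ≤ m → m ≤ M → ∀ i j,
      A m i j = G i j * ∑ k ∈ Finset.range m, Psum L L' G k i j := by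
    intro m
    induction m with
    | zero => omega
    | succ n ih =>
      intro _ hmM i j
      rcases Nat.eq_zero_or_pos n with hn | hn
      · subst hn
        rw [hA1 i j]
        simp [Psum_zero]
      · have h2 : 2 ≤ n + 1 := by omega
        rw [hArec (n+1) h2 hmM i j]
        have hA' : ∀ i' j', A n i' j' = G i' j' * ∑ k ∈ Finset.range n, Psum L L' G k i' j' :=
          fun i' j' => ih hn (by omega) i' j'
        simp only [Nat.add_sub_cancel, hA']
        congr 1
        simp only [Finset.mul_sum]
        rw [swap]
        simp only [← Psum_succ]
        rw [Finset.sum_range_succ' (fun k => Psum L L' G k i j) n, Psum_zero, add_comm]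
  have hAM := fun i j => hAeq M hM le_rfl i j
  simp only [hAM]
  simp only [Finset.mul_sum]
  rw [swap univ univ (fun i j k => G i j * Psum L L' G k i j) M]
  simp only [← Q_succ]
  rw [Finset.sum_range_succ' _ M, Q_zero, add_comm]
end

section
/- Let X be a set, let k : X × X → ℝ be a symmetric positive semidefinite kernel, and let M ∈ ℕ. For finite sequences σ = (σ_0, σ_1, …, σ_L) and τ = (τ_0, τ_1, …, τ_{L'}) in X define the increment kernel ∇k(σ,τ)(i,j) = k(σ_i, τ_j) + k(σ_{i−1}, τ_{j−1}) − k(σ_{i−1}, τ_j) − k(σ_i, τ_{j−1}) for 1 ≤ i ≤ L, 1 ≤ j ≤ L', and define the sequentialized kernel k⁺_M(σ,τ) = Σ_{m=0}^{M} Σ_{𝐢} Σ_{𝐣} ∏_{r=1}^{m} ∇k(σ,τ)(i_r, j_r), summing over all strictly increasing tuples 𝐢 in {1,…,L} and 𝐣 in {1,…,L'} of the same length m (the m = 0 term contributing 1). Then k⁺_M is a symmetric positive semidefinite kernel on the set of finite sequences in X: for every n, every sequences σ^{(1)}, …, σ^{(n)} and every c_1, …, c_n ∈ ℝ, one has Σ_{a,b=1}^{n}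 c_a c_b · k⁺_M(σ^{(a)}, σ^{(b)}) ≥ 0. -/
open Classical Finset in
/-- The increment kernel `∇k(σ,τ)(i,j)` for sequences `σ = (σ₀,…,σ_L)`,
`τ = (τ₀,…,τ_{L'})` (here `i : Fin L` corresponds to the index `i+1 ∈ {1,…,L}`). -/
noncomputable def incKernel {X : Type*} (k : X → X → ℝ) {L L' : ℕ}
    (σ : Fin (L + 1) → X) (τ : Fin (L' + 1) → X) (i : Fin L) (j : Fin L') : ℝ :=
  k (σ i.succ) (τ j.succ) + k (σ i.castSucc) (τ j.castSucc)
    - k (σ i.castSucc) (τ j.succ) - k (σ i.succ) (τ j.castSucc)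

open Classical Finset in
/-- The sequentialization `k⁺_M` of a kernel `k`, truncated at level `M`:
`k⁺_M(σ,τ) = ∑_{m=0}^{M} ∑_{𝐢,𝐣 strictly increasing, |𝐢|=|𝐣|=m} ∏_r ∇k(σ,τ)(i_r,j_r)`. -/
noncomputable def seqKernel {X : Type*} (k : X → X → ℝ) (M : ℕ) {L L' : ℕ}
    (σ : Fin (L + 1) → X) (τ : Fin (L' + 1) → X) : ℝ :=
  ∑ m ∈ Finset.range (M + 1),
    ∑ ι ∈ Finset.univ.filter (fun ι : Fin m → Fin L => StrictMono ι),
      ∑ κ ∈ Finset.univ.filter (fun κ : Fin m → Fin L' => StrictMono κ),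
        ∏ r, incKernel k σ τ (ι r) (κ r)

open Finset in
/-- A Gram-type double sum is a sum of squares, hence nonnegative. -/
lemma gram_sq {n : ℕ} {F : Type*} [Fintype F] (w : Fin n → ℝ) (v : F → Fin n → ℝ) :
    0 ≤ ∑ a, ∑ b, w a * w b * (∑ f, v f a * v f b) := by
  have h : ∑ a, ∑ b, w a * w b * (∑ f, v f a * v f b)
      = ∑ f, (∑ a, w a * v f a) ^ 2 := by
    have h1 : ∀ f : F, (∑ a, w a * v f a) ^ 2
        = ∑ a, ∑ b, (w a * v f a) * (w b * v f b) := fun f => by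
      rw [sq, Finset.sum_mul_sum]
    calc ∑ a, ∑ b, w a * w b * (∑ f, v f a * v f b)
        = ∑ a, ∑ b, ∑ f, (w a * v f a) * (w b * v f b) := by
          refine Finset.sum_congr rfl fun a _ => Finset.sum_congr rfl fun b _ => ?_
          rw [Finset.mul_sum]
          exact Finset.sum_congr rfl fun f _ => by ring
      _ = ∑ a, ∑ f, ∑ b, (w a * v f a) * (w b * v f b) :=
          Finset.sum_congr rfl fun a _ => Finset.sum_comm
      _ = ∑ f, ∑ a, ∑ b, (w a * v f a) * (w b * v f b) := Finset.sum_comm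
      _ = ∑ f, (∑ a, w a * v f a) ^ 2 :=
          Finset.sum_congr rfl fun f _ => (h1 f).symm
  rw [h]
  exact Finset.sum_nonneg fun f _ => sq_nonneg _

open Finset in
/-- Any finite family of points of a symmetric psd kernel admits a Gram representation. -/
lemma exists_gram {X : Type*} (k : X → X → ℝ)
    (hsymm : ∀ x y, k x y = k y x)
    (hpsd : ∀ (n : ℕ) (x : Fin n → X) (c : Fin n → ℝ),
      0 ≤ ∑ a, ∑ b, c a * c b * k (x a) (x b))
    {Q : Type*} [Fintype Q] [DecidableEq Q] (p : Q → X) :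
    ∃ B : Q → Q → ℝ, ∀ q q', k (p q) (p q') = ∑ i, B i q * B i q' := by
  set A : Matrix Q Q ℝ := Matrix.of fun q q' => k (p q) (p q') with hA
  have hPSD : A.PosSemidef := by
    refine Matrix.posSemidef_iff_dotProduct_mulVec.mpr ⟨?_, ?_⟩
    · ext q q'
      simp [A, Matrix.conjTranspose_apply, hsymm]
    · intro v
      have e := Fintype.equivFin Q
      have h := hpsd (Fintype.card Q) (fun a => p (e.symm a)) (fun a => v (e.symm a))
      have h2 : ∑ a, ∑ b, v (e.symm a) * v (e.symm b) * k (p (e.symm a)) (p (e.symm b))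
          = ∑ q, ∑ q', v q * v q' * k (p q) (p q') := by
        exact Fintype.sum_equiv e.symm _ _ fun a =>
          Fintype.sum_equiv e.symm _ _ fun b => rfl
      rw [h2] at h
      convert h using 1
      · rfl
      simp only [dotProduct, Matrix.mulVec, dotProduct, star_trivial,
        Pi.star_apply, Finset.mul_sum]
      refine Finset.sum_congr rfl fun q _ => Finset.sum_congr rfl fun q' _ => ?_
      simp [A]
      ring
  open scoped MatrixOrder in
  obtain ⟨B, hB⟩ := CStarAlgebra.nonneg_iff_eq_star_mul_self.mp hPSD.nonneg
  refine ⟨fun i q => B i q, fun q q' => ?_⟩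
  have : A q q' = (B.conjTranspose * B) q q' := by rw [← Matrix.star_eq_conjTranspose, ← hB]
  simpa [Matrix.mul_apply, Matrix.conjTranspose_apply, A] using this

open Finset in
/-- Rearranging a Gram-type triple sum. -/
lemma triple_sum_rearrange {F α β : Type*} [Fintype F]
    (sA : Finset α) (sB : Finset β) (P : α → F → ℝ) (R : β → F → ℝ) :
    ∑ ι ∈ sA, ∑ κ ∈ sB, ∑ f : F, P ι f * R κ f
      = ∑ f : F, (∑ ι ∈ sA, P ι f) * (∑ κ ∈ sB, R κ f) := by
  calc ∑ ι ∈ sA, ∑ κ ∈ sB, ∑ f : F, P ι f * R κ f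
      = ∑ ι ∈ sA, ∑ f : F, ∑ κ ∈ sB, P ι f * R κ f :=
        Finset.sum_congr rfl fun ι _ => Finset.sum_comm
    _ = ∑ f : F, ∑ ι ∈ sA, ∑ κ ∈ sB, P ι f * R κ f := Finset.sum_comm
    _ = ∑ f : F, (∑ ι ∈ sA, P ι f) * (∑ κ ∈ sB, R κ f) :=
        Finset.sum_congr rfl fun f _ => (Finset.sum_mul_sum _ _ _ _).symm

/-- The truncated sequentialization of a symmetric positive semidefinite kernel is
again a symmetric positive semidefinite kernel on finite sequences. -/
theorem seqKernel_symm_posSemidef {X : Type*} (k : X → X → ℝ)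
    (hsymm : ∀ x y, k x y = k y x)
    (hpsd : ∀ (n : ℕ) (x : Fin n → X) (c : Fin n → ℝ),
      0 ≤ ∑ a, ∑ b, c a * c b * k (x a) (x b))
    (M : ℕ) :
    (∀ (L L' : ℕ) (σ : Fin (L + 1) → X) (τ : Fin (L' + 1) → X),
        seqKernel k M σ τ = seqKernel k M τ σ) ∧
    (∀ (n : ℕ) (Len : Fin n → ℕ) (σ : ∀ a, Fin (Len a + 1) → X) (c : Fin n → ℝ),
        0 ≤ ∑ a, ∑ b, c a * c b * seqKernel k M (σ a) (σ b)) := by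
  classical
  constructor
  · -- symmetry
    intro L L' σ τ
    simp only [seqKernel]
    refine Finset.sum_congr rfl fun m _ => ?_
    rw [Finset.sum_comm]
    refine Finset.sum_congr rfl fun κ _ => Finset.sum_congr rfl fun ι _ =>
      Finset.prod_congr rfl fun r _ => ?_
    simp only [incKernel]
    rw [hsymm (σ (ι r).succ) (τ (κ r).succ), hsymm (σ (ι r).castSucc) (τ (κ r).castSucc),
      hsymm (σ (ι r).castSucc) (τ (κ r).succ), hsymm (σ (ι r).succ) (τ (κ r).castSucc)]
    ring
  · -- positive semidefiniteness
    intro n Len σ c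
    obtain ⟨B, hB⟩ := exists_gram k hsymm hpsd
      (fun q : Σ a : Fin n, Fin (Len a + 1) => σ q.1 q.2)
    set D : (Σ a : Fin n, Fin (Len a + 1)) → ∀ a : Fin n, Fin (Len a) → ℝ :=
      fun q a i => B q ⟨a, i.succ⟩ - B q ⟨a, i.castSucc⟩ with hD
    have hinc : ∀ (a b : Fin n) (i : Fin (Len a)) (j : Fin (Len b)),
        incKernel k (σ a) (σ b) i j = ∑ q, D q a i * D q b j := by
      intro a b i j
      have h1 := hB ⟨a, i.succ⟩ ⟨b, j.succ⟩
      have h2 := hB ⟨a, i.castSucc⟩ ⟨b, j.castSucc⟩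
      have h3 := hB ⟨a, i.castSucc⟩ ⟨b, j.succ⟩
      have h4 := hB ⟨a, i.succ⟩ ⟨b, j.castSucc⟩
      simp only [incKernel]
      rw [h1, h2, h3, h4, ← Finset.sum_add_distrib, ← Finset.sum_sub_distrib,
        ← Finset.sum_sub_distrib]
      exact Finset.sum_congr rfl fun q _ => by simp only [hD]; ring
    -- swap the m-sum outside
    have hswap : ∑ a, ∑ b, c a * c b * seqKernel k M (σ a) (σ b)
        = ∑ m ∈ Finset.range (M + 1), ∑ a, ∑ b, c a * c b *
            (∑ ι ∈ Finset.univ.filter (fun ι : Fin m → Fin (Len a) => StrictMono ι),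
              ∑ κ ∈ Finset.univ.filter (fun κ : Fin m → Fin (Len b) => StrictMono κ),
                ∏ r, incKernel k (σ a) (σ b) (ι r) (κ r)) := by
      simp only [seqKernel, Finset.mul_sum]
      calc ∑ a, ∑ b, ∑ m ∈ Finset.range (M + 1), _
          = ∑ a, ∑ m ∈ Finset.range (M + 1), ∑ b, _ :=
            Finset.sum_congr rfl fun a _ => Finset.sum_comm
        _ = ∑ m ∈ Finset.range (M + 1), ∑ a, ∑ b, _ := Finset.sum_comm
    rw [hswap]
    refine Finset.sum_nonneg fun m _ => ?_
    -- rewrite the inner double sum as a Gram sum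
    have hmterm : ∀ a b : Fin n,
        (∑ ι ∈ Finset.univ.filter (fun ι : Fin m → Fin (Len a) => StrictMono ι),
          ∑ κ ∈ Finset.univ.filter (fun κ : Fin m → Fin (Len b) => StrictMono κ),
            ∏ r, incKernel k (σ a) (σ b) (ι r) (κ r))
        = ∑ f : Fin m → Σ a : Fin n, Fin (Len a + 1),
            (∑ ι ∈ Finset.univ.filter (fun ι : Fin m → Fin (Len a) => StrictMono ι),
              ∏ r, D (f r) a (ι r)) *
            (∑ κ ∈ Finset.univ.filter (fun κ : Fin m → Fin (Len b) => StrictMono κ),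
              ∏ r, D (f r) b (κ r)) := by
      intro a b
      rw [← triple_sum_rearrange]
      refine Finset.sum_congr rfl fun ι _ => Finset.sum_congr rfl fun κ _ => ?_
      calc ∏ r, incKernel k (σ a) (σ b) (ι r) (κ r)
          = ∏ r, ∑ q, D q a (ι r) * D q b (κ r) :=
            Finset.prod_congr rfl fun r _ => hinc a b (ι r) (κ r)
        _ = ∑ f ∈ Fintype.piFinset (fun _ : Fin m => (Finset.univ : Finset (Σ a : Fin n, Fin (Len a + 1)))),
              ∏ r, D (f r) a (ι r) * D (f r) b (κ r) := Finset.prod_univ_sum _ _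
        _ = ∑ f : Fin m → Σ a : Fin n, Fin (Len a + 1), ∏ r, D (f r) a (ι r) * D (f r) b (κ r) := by
              rw [Fintype.piFinset_univ]
        _ = ∑ f : Fin m → Σ a : Fin n, Fin (Len a + 1), (∏ r, D (f r) a (ι r)) * (∏ r, D (f r) b (κ r)) :=
              Finset.sum_congr rfl fun f _ => Finset.prod_mul_distrib
    have : ∑ a, ∑ b, c a * c b *
        (∑ ι ∈ Finset.univ.filter (fun ι : Fin m → Fin (Len a) => StrictMono ι),
          ∑ κ ∈ Finset.univ.filter (fun κ : Fin m → Fin (Len b) => StrictMono κ),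
            ∏ r, incKernel k (σ a) (σ b) (ι r) (κ r))
        = ∑ a, ∑ b, c a * c b * (∑ f : Fin m → Σ a : Fin n, Fin (Len a + 1),
            (fun (f : Fin m → Σ a : Fin n, Fin (Len a + 1)) (a : Fin n) =>
              ∑ ι ∈ Finset.univ.filter (fun ι : Fin m → Fin (Len a) => StrictMono ι),
                ∏ r, D (f r) a (ι r)) f a *
            (fun (f : Fin m → Σ a : Fin n, Fin (Len a + 1)) (a : Fin n) =>
              ∑ ι ∈ Finset.univ.filter (fun ι : Fin m → Fin (Len a) => StrictMono ι),
                ∏ r, D (f r) a (ι r)) f b) :=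
      Finset.sum_congr rfl fun a _ => Finset.sum_congr rfl fun b _ => by
        rw [hmterm a b]
    rw [this]
    exact gram_sq c _
end

section
/- Let Σ be a set (an alphabet) and λ > 0 a real parameter. For finite strings σ ∈ Σ^L and τ ∈ Σ^{L'} define K_Σ(σ,τ) = Σ_{m≥1} Σ_{𝐢} Σ_{𝐣} λ^{(i_m − i_1 + 1) + (j_m − j_1 + 1)} · ∏_{r=1}^{m} 𝟙(σ_{i_r} = τ_{j_r}), where the sums range over all pairs of nonempty strictly increasing tuples 𝐢 = (i_1 < ⋯ < i_m) in {1,…,L} and 𝐣 = (j_1 < ⋯ < j_m) in {1,…,L'} of the same length m, and 𝟙(a = b) is 1 if a = b and 0 otherwise. Then K_Σ is a symmetric positive semidefinite kernel on the set of finite strings over Σ: for every n, every strings σ^{(1)}, …, σ^{(n)} and every c_1, …, c_n ∈ ℝ, one has Σ_{a,b=1}^{n} c_a c_b · K_Σ(σ^{(a)}, σ^{(b)}) ≥ 0. -/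
open Classical Finset in
/-- The string kernel of Lodhi et al. with decay parameter `lam`:
`K_Σ(σ,τ) = ∑_{m≥1} ∑_{𝐢,𝐣 strictly increasing nonempty tuples of equal length m}
lam^{d(𝐢)+d(𝐣)} ∏_r 𝟙(σ_{i_r} = τ_{j_r})` with `d(𝐢) = i_m − i₁ + 1`.
(Here tuples of length `m+1` range over `m ∈ {0,…,min L L' − 1}`.) -/
noncomputable def stringKernel {Alph : Type*} (lam : ℝ) {L L' : ℕ}
    (σ : Fin L → Alph) (τ : Fin L' → Alph) : ℝ :=
  ∑ m ∈ Finset.range (min L L'),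
    ∑ ι ∈ Finset.univ.filter (fun ι : Fin (m + 1) → Fin L => StrictMono ι),
      ∑ κ ∈ Finset.univ.filter (fun κ : Fin (m + 1) → Fin L' => StrictMono κ),
        lam ^ (((ι (Fin.last m)).val - (ι 0).val + 1)
                + ((κ (Fin.last m)).val - (κ 0).val + 1))
          * ∏ r, (if σ (ι r) = τ (κ r) then (1 : ℝ) else 0)


open Classical Finset

lemma sm_filter_empty {L m : ℕ} (h : L ≤ m) :
    (Finset.univ.filter (fun ι : Fin (m+1) → Fin L => StrictMono ι)) = ∅ := by
  ext ι
  simp only [mem_filter, mem_univ, true_and, notMem_empty, iff_false]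
  intro hι
  have := Fintype.card_le_of_injective ι hι.injective
  simp only [Fintype.card_fin] at this
  omega

noncomputable def skTerm {Alph : Type*} (lam : ℝ) {L L' : ℕ}
    (σ : Fin L → Alph) (τ : Fin L' → Alph) (m : ℕ) : ℝ :=
  ∑ ι ∈ Finset.univ.filter (fun ι : Fin (m + 1) → Fin L => StrictMono ι),
    ∑ κ ∈ Finset.univ.filter (fun κ : Fin (m + 1) → Fin L' => StrictMono κ),
      lam ^ (((ι (Fin.last m)).val - (ι 0).val + 1)
              + ((κ (Fin.last m)).val - (κ 0).val + 1))
        * ∏ r, (if σ (ι r) = τ (κ r) then (1 : ℝ) else 0)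

noncomputable def feat {Alph : Type*} (lam : ℝ) {L : ℕ}
    (σ : Fin L → Alph) (m : ℕ) (w : Fin (m+1) → Alph) : ℝ :=
  ∑ ι ∈ Finset.univ.filter (fun ι : Fin (m + 1) → Fin L => StrictMono ι),
    lam ^ (((ι (Fin.last m)).val - (ι 0).val + 1)) * (if (fun r => σ (ι r)) = w then (1:ℝ) else 0)

lemma skTerm_zero {Alph : Type*} (lam : ℝ) {L L' : ℕ}
    (σ : Fin L → Alph) (τ : Fin L' → Alph) {m : ℕ} (hm : min L L' ≤ m) :
    skTerm lam σ τ m = 0 := by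
  unfold skTerm
  rcases min_le_iff.1 hm with h | h
  · rw [sm_filter_empty h, Finset.sum_empty]
  · exact Finset.sum_eq_zero fun ι _ => by rw [sm_filter_empty h, Finset.sum_empty]

lemma skTerm_eq_feat {Alph : Type*} (lam : ℝ) {L L' : ℕ}
    (σ : Fin L → Alph) (τ : Fin L' → Alph) (m : ℕ) (A : Finset Alph)
    (hσ : ∀ i, σ i ∈ A) (hτ : ∀ j, τ j ∈ A) :
    skTerm lam σ τ m = ∑ w ∈ Fintype.piFinset (fun _ : Fin (m+1) => A),
      feat lam σ m w * feat lam τ m w := by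
  unfold skTerm feat
  rw [Finset.sum_congr rfl (fun w _ => Finset.sum_mul_sum
    (Finset.univ.filter (fun ι : Fin (m + 1) → Fin L => StrictMono ι))
    (Finset.univ.filter (fun κ : Fin (m + 1) → Fin L' => StrictMono κ))
    (fun ι => lam ^ (((ι (Fin.last m)).val - (ι 0).val + 1)) * (if (fun r => σ (ι r)) = w then (1:ℝ) else 0))
    (fun κ => lam ^ (((κ (Fin.last m)).val - (κ 0).val + 1)) * (if (fun r => τ (κ r)) = w then (1:ℝ) else 0)))]
  refine Eq.symm ?_
  rw [Finset.sum_comm (s := Fintype.piFinset fun _ : Fin (m+1) => A)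
      (t := Finset.univ.filter (fun ι : Fin (m + 1) → Fin L => StrictMono ι))]
  refine Finset.sum_congr rfl fun ι hι => ?_
  rw [Finset.sum_comm (s := Fintype.piFinset fun _ : Fin (m+1) => A)
      (t := Finset.univ.filter (fun κ : Fin (m + 1) → Fin L' => StrictMono κ))]
  refine Eq.symm ?_
  refine Finset.sum_congr rfl fun κ hκ => ?_
  have key : ∑ w ∈ Fintype.piFinset (fun _ : Fin (m+1) => A),
      (if (fun r => σ (ι r)) = w then (1:ℝ) else 0) * (if (fun r => τ (κ r)) = w then (1:ℝ) else 0)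
      = ∏ r, (if σ (ι r) = τ (κ r) then (1:ℝ) else 0) := by
    have h1 : ∀ w, (if (fun r => σ (ι r)) = w then (1:ℝ) else 0) * (if (fun r => τ (κ r)) = w then (1:ℝ) else 0)
        = if w = (fun r => σ (ι r)) then (if (fun r => τ (κ r)) = (fun r => σ (ι r)) then (1:ℝ) else 0) else 0 := by
      intro w
      by_cases h : (fun r => σ (ι r)) = w
      · subst h; simp
      · rw [if_neg h, zero_mul, if_neg (fun h' : w = _ => h h'.symm)]
    simp_rw [h1]
    rw [Finset.sum_ite_eq' (Fintype.piFinset fun _ => A)]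
    have hmem : (fun r => σ (ι r)) ∈ Fintype.piFinset (fun _ : Fin (m+1) => A) := by
      rw [Fintype.mem_piFinset]; exact fun r => hσ (ι r)
    rw [if_pos hmem, Finset.prod_boole]
    by_cases h : (fun r => τ (κ r)) = (fun r => σ (ι r))
    · rw [if_pos h, if_pos]
      intro r _
      exact (congrFun h r).symm
    · rw [if_neg h, if_neg]
      intro hall
      exact h (funext fun r => (hall r (Finset.mem_univ r)).symm)
  rw [← key, Finset.mul_sum]
  refine Finset.sum_congr rfl fun w hw => ?_
  rw [pow_add]; ring

lemma stringKernel_eq_skTerm {Alph : Type*} (lam : ℝ) {L L' : ℕ}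
    (σ : Fin L → Alph) (τ : Fin L' → Alph) :
    stringKernel lam σ τ = ∑ m ∈ Finset.range (min L L'), skTerm lam σ τ m := rfl

lemma stringKernel_eq_range {Alph : Type*} (lam : ℝ) {L L' : ℕ}
    (σ : Fin L → Alph) (τ : Fin L' → Alph) {N : ℕ} (hN : min L L' ≤ N) :
    stringKernel lam σ τ = ∑ m ∈ Finset.range N, skTerm lam σ τ m := by
  rw [stringKernel_eq_skTerm]
  refine Finset.sum_subset (Finset.range_subset_range.2 hN) fun m _ hm => ?_
  simp only [Finset.mem_range, not_lt] at hm
  exact skTerm_zero lam σ τ hm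

lemma skTerm_symm {Alph : Type*} (lam : ℝ) {L L' : ℕ}
    (σ : Fin L → Alph) (τ : Fin L' → Alph) (m : ℕ) :
    skTerm lam σ τ m = skTerm lam τ σ m := by
  unfold skTerm
  rw [Finset.sum_comm]
  refine Finset.sum_congr rfl fun κ _ => Finset.sum_congr rfl fun ι _ => ?_
  rw [add_comm]
  congr 1
  exact Finset.prod_congr rfl fun r _ => if_congr eq_comm rfl rfl

lemma quad_nonneg {n : ℕ} {W : Type*} (s : Finset W) (c : Fin n → ℝ) (f : Fin n → W → ℝ) :
    0 ≤ ∑ a, ∑ b, c a * c b * ∑ w ∈ s, f a w * f b w := by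
  have e1 : ∀ a, ∑ b, ∑ w ∈ s, c a * c b * (f a w * f b w)
      = ∑ w ∈ s, ∑ b, (c a * f a w) * (c b * f b w) := fun a => by
    rw [Finset.sum_comm]
    exact Finset.sum_congr rfl fun w _ => Finset.sum_congr rfl fun b _ => by ring
  have h : ∑ a, ∑ b, c a * c b * ∑ w ∈ s, f a w * f b w
      = ∑ w ∈ s, (∑ a, c a * f a w) ^ 2 := by
    simp_rw [Finset.mul_sum]
    rw [Finset.sum_congr rfl (fun a _ => e1 a), Finset.sum_comm]
    refine Finset.sum_congr rfl fun w _ => ?_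
    rw [sq, Finset.sum_mul_sum]
  rw [h]
  exact Finset.sum_nonneg fun w _ => sq_nonneg _

/-- The string kernel is a symmetric positive semidefinite kernel on finite strings. -/
theorem stringKernel_symm_posSemidef {Alph : Type*} (lam : ℝ) (hlam : 0 < lam) :
    (∀ (L L' : ℕ) (σ : Fin L → Alph) (τ : Fin L' → Alph),
        stringKernel lam σ τ = stringKernel lam τ σ) ∧
    (∀ (n : ℕ) (Len : Fin n → ℕ) (σ : ∀ a, Fin (Len a) → Alph) (c : Fin n → ℝ),
        0 ≤ ∑ a, ∑ b, c a * c b * stringKernel lam (σ a) (σ b)) := by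
  constructor
  · intro L L' σ τ
    rw [stringKernel_eq_skTerm, stringKernel_eq_skTerm, min_comm]
    exact Finset.sum_congr rfl fun m _ => skTerm_symm lam σ τ m
  · intro n Len σ c
    set N : ℕ := Finset.univ.sup Len with hNdef
    have hN : ∀ a b : Fin n, min (Len a) (Len b) ≤ N :=
      fun a b => le_trans (min_le_left _ _) (Finset.le_sup (Finset.mem_univ a))
    set A : Finset Alph := Finset.univ.biUnion (fun a => Finset.image (σ a) Finset.univ) with hA
    have hmem : ∀ (a : Fin n) (i : Fin (Len a)), σ a i ∈ A := fun a i =>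
      Finset.mem_biUnion.2 ⟨a, Finset.mem_univ a, Finset.mem_image_of_mem _ (Finset.mem_univ i)⟩
    have hK : ∀ a b, stringKernel lam (σ a) (σ b)
        = ∑ m ∈ Finset.range N, ∑ w ∈ Fintype.piFinset (fun _ : Fin (m+1) => A),
            feat lam (σ a) m w * feat lam (σ b) m w := fun a b => by
      rw [stringKernel_eq_range lam (σ a) (σ b) (hN a b)]
      exact Finset.sum_congr rfl fun m _ => skTerm_eq_feat lam (σ a) (σ b) m A (hmem a) (hmem b)
    have e1 : ∀ a, ∑ b, c a * c b * stringKernel lam (σ a) (σ b)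
        = ∑ m ∈ Finset.range N, ∑ b, c a * c b *
            ∑ w ∈ Fintype.piFinset (fun _ : Fin (m+1) => A),
              feat lam (σ a) m w * feat lam (σ b) m w := by
      intro a
      rw [Finset.sum_congr rfl (fun b _ => by rw [hK a b, Finset.mul_sum]), Finset.sum_comm]
    rw [Finset.sum_congr rfl (fun a _ => e1 a), Finset.sum_comm]
    exact Finset.sum_nonneg fun m _ => quad_nonneg _ c (fun a w => feat lam (σ a) m w)
end

section
/- Let D ≥ 1 be an integer, let L, L' be positive integers, and let g : ℕ × ℕ → ℝ. For integers m ≥ 1, 1 ≤ d, d' ≤ D, 1 ≤ i ≤ L and 1 ≤ j ≤ L', define A[m|d,d'|i,j] as the sum of (1/(𝐢!·𝐣!)) · ∏_{r=1}^{ℓ} g(i_r, j_r) over all pairs (𝐢, 𝐣) of weakly increasing tuples of the same length ℓ with 1 ≤ ℓ ≤ m, where 𝐢 has values in {1,…,L} with each value occurring at most D times and begins with exactly d copies of i (i.e. i_1 = ⋯ = i_d = i and, if ℓ > d, i_{d+1} ≠ i), and 𝐣 has values in {1,…,L'} with each value occurring at most D times and begins with exactly d' copies of j. Then for all m ≥ 2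 the following recursion equalities hold: (1) A[m|1,1|i,j] = g(i,j) · ( 1 + Σ_{i' > i} Σ_{j' > j} Σ_{d=1}^{D} Σ_{d'=1}^{D} A[m−1|d,d'|i',j'] ); (2) for d ≥ 2: A[m|d,1|i,j] = (1/d) · g(i,j) · Σ_{j' > j} Σ_{κ=1}^{D} A[m−1|d−1,κ|i,j']; (3) for d' ≥ 2: A[m|1,d'|i,j] = (1/d') · g(i,j) · Σ_{i' > i} Σ_{κ=1}^{D} A[m−1|κ,d'−1|i',j]; (4) for d, d' ≥ 2: A[m|d,d'|i,j] = (1/(d·d')) · g(i,j) · A[m−1|d−1,d'−1|i,j]. -/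
open Classical Finset in
/-- The multiplicity factorial `𝐢!` of a tuple `ι`: the product of the factorials
of the numbers of occurrences of the values of `ι`. -/
noncomputable def tupleFact {ℓ L : ℕ} (ι : Fin ℓ → Fin L) : ℕ :=
  ∏ v : Fin L, Nat.factorial ((Finset.univ.filter (fun r => ι r = v)).card)

open Classical Finset in
/-- `ValidTuple D ι d i` says: `ι` is weakly increasing, every value occurs at most
`D` times, and `ι` begins with exactly `d` copies of `i` (i.e. `d ≤ ℓ`, the first `d`
entries equal `i`, and the `(d+1)`-st entry, if present, differs from `i`). -/
def ValidTuple (D : ℕ) {ℓ L : ℕ} (ι : Fin ℓ → Fin L) (d : ℕ) (i : Fin L) : Prop :=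
  Monotone ι ∧ (∀ v : Fin L, (Finset.univ.filter (fun r => ι r = v)).card ≤ D) ∧
    d ≤ ℓ ∧ (∀ r : Fin ℓ, r.val < d → ι r = i) ∧ ∀ h : d < ℓ, ι ⟨d, h⟩ ≠ i

open Classical Finset in
/-- The dynamic-programming array `A[m|d,d'|i,j]` for the higher order sequential
kernel: the sum of `(1/(𝐢!·𝐣!)) ∏_r g(i_r, j_r)` over all pairs `(𝐢,𝐣)` of weakly
increasing tuples of equal length `ℓ ∈ {1,…,m}`, with each value occurring at most
`D` times, `𝐢` beginning with exactly `d` copies of `i` and `𝐣` with exactly `d'`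
copies of `j`. -/
noncomputable def dpArray (D : ℕ) {L L' : ℕ} (g : Fin L → Fin L' → ℝ)
    (m d d' : ℕ) (i : Fin L) (j : Fin L') : ℝ :=
  ∑ ℓ ∈ Finset.Icc 1 m,
    ∑ p ∈ Finset.univ.filter
        (fun p : (Fin ℓ → Fin L) × (Fin ℓ → Fin L') =>
          ValidTuple D p.1 d i ∧ ValidTuple D p.2 d' j),
      ((tupleFact p.1 : ℝ) * (tupleFact p.2 : ℝ))⁻¹ * ∏ r, g (p.1 r) (p.2 r)


open Classical Finset

noncomputable def cnt {ℓ L : ℕ} (ι : Fin ℓ → Fin L) (v : Fin L) : ℕ :=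
  (Finset.univ.filter (fun r => ι r = v)).card

lemma tupleFact_eq {ℓ L : ℕ} (ι : Fin ℓ → Fin L) :
    tupleFact ι = ∏ v : Fin L, (cnt ι v).factorial := rfl

lemma cnt_cons {n L : ℕ} (a : Fin L) (ι : Fin n → Fin L) (v : Fin L) :
    cnt (Fin.cons a ι) v = (if a = v then 1 else 0) + cnt ι v := by
  unfold cnt
  rw [Finset.card_filter, Finset.card_filter, Fin.sum_univ_succ]
  simp

lemma tupleFact_cons {n L : ℕ} (a : Fin L) (ι : Fin n → Fin L) :
    tupleFact (Fin.cons a ι) = (cnt ι a + 1) * tupleFact ι := by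
  rw [tupleFact_eq, tupleFact_eq, ← Finset.mul_prod_erase univ _ (mem_univ a),
    ← Finset.mul_prod_erase univ (fun v => (cnt ι v).factorial) (mem_univ a)]
  have h1 : ∀ v ∈ univ.erase a, (cnt (Fin.cons a ι) v).factorial = (cnt ι v).factorial := by
    intro v hv
    rw [cnt_cons]
    rw [if_neg (fun h => Finset.ne_of_mem_erase hv h.symm), Nat.zero_add]
  rw [Finset.prod_congr rfl h1, cnt_cons, if_pos rfl, Nat.add_comm 1 (cnt ι a)]
  rw [Nat.factorial_succ]
  ring

lemma monotone_cons_iff {n L : ℕ} {a : Fin L} {ι : Fin (n + 1) → Fin L} :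
    Monotone (Fin.cons a ι) ↔ a ≤ ι 0 ∧ Monotone ι :=
  monotone_vecCons

lemma card_val_lt {ℓ : ℕ} (d : ℕ) (hd : d ≤ ℓ) :
    ((univ : Finset (Fin ℓ)).filter (fun r => r.val < d)).card = d := by
  rw [← Finset.card_range d]
  apply Finset.card_bij (fun r _ => r.val)
  · intro a ha; simp only [mem_filter, mem_univ, true_and] at ha; simpa using ha
  · intro a _ b _ h; exact Fin.val_injective h
  · intro b hb
    simp only [Finset.mem_range] at hb
    exact ⟨⟨b, lt_of_lt_of_le hb hd⟩, by simp [hb], rfl⟩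

lemma valid_cnt {D d ℓ L : ℕ} {ι : Fin ℓ → Fin L} {i : Fin L}
    (h : ValidTuple D ι d i) (hd : 1 ≤ d) : cnt ι i = d := by
  obtain ⟨hmono, _, hdl, hlead, hne⟩ := h
  have : (univ.filter (fun r => ι r = i)) = (univ.filter (fun r : Fin ℓ => r.val < d)) := by
    ext r
    simp only [mem_filter, mem_univ, true_and]
    constructor
    · intro hr
      by_contra hge
      push_neg at hge
      have hdl' : d < ℓ := lt_of_le_of_lt hge r.isLt
      refine hne hdl' ?_
      have h0 : ι ⟨0, lt_of_le_of_lt (Nat.zero_le _) r.isLt⟩ = i :=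
        hlead _ (lt_of_lt_of_le Nat.zero_lt_one hd)
      have hle1 : ι ⟨d, hdl'⟩ ≤ ι r := hmono (by exact hge)
      have hle2 : ι ⟨0, lt_of_le_of_lt (Nat.zero_le _) r.isLt⟩ ≤ ι ⟨d, hdl'⟩ :=
        hmono (by simp [Fin.le_def])
      rw [hr] at hle1
      rw [h0] at hle2
      exact le_antisymm hle1 hle2
    · exact hlead r
  rw [cnt, this, card_val_lt d hdl]

-- continuing
lemma cnt_pos_head {n L : ℕ} (ι : Fin (n + 1) → Fin L) : 1 ≤ cnt ι (ι 0) := by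
  rw [cnt, Finset.one_le_card]
  exact ⟨0, by simp⟩

lemma cnt_le {n L : ℕ} (ι : Fin n → Fin L) (v : Fin L) : cnt ι v ≤ n := by
  exact le_trans (Finset.card_filter_le _ _) (by simp)

/-- A monotone tuple with all multiplicities at most `D` is valid for its own head value
and head run length. -/
lemma valid_head {D n L : ℕ} {ι : Fin (n + 1) → Fin L} (hmono : Monotone ι)
    (hcard : ∀ v : Fin L, cnt ι v ≤ D) : ValidTuple D ι (cnt ι (ι 0)) (ι 0) := by
  have he : cnt ι (ι 0) = (univ.filter (fun r' => ι r' = ι 0)).card := rfl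
  refine ⟨hmono, hcard, ?_, ?_, ?_⟩
  · exact cnt_le ι (ι 0)
  · intro r hr
    by_contra hne
    have h1 : ι 0 ≤ ι r := hmono (Fin.zero_le r)
    have hsub : univ.filter (fun r' => ι r' = ι 0) ⊆ Finset.Iio r := by
      intro r' hr'
      simp only [mem_filter, mem_univ, true_and] at hr'
      rw [Finset.mem_Iio]
      by_contra hge
      push_neg at hge
      have := hmono hge
      rw [hr'] at this
      exact hne (le_antisymm this h1)
    have := Finset.card_le_card hsub
    rw [Fin.card_Iio] at this
    omega
  · intro hlt heq
    have hsub : Finset.Iic (⟨cnt ι (ι 0), hlt⟩ : Fin (n + 1)) ⊆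
        univ.filter (fun r' => ι r' = ι 0) := by
      intro r' hr'
      rw [Finset.mem_Iic] at hr'
      have h1 : ι 0 ≤ ι r' := hmono (Fin.zero_le r')
      have h2 : ι r' ≤ ι ⟨cnt ι (ι 0), hlt⟩ := hmono hr'
      rw [heq] at h2
      simp only [mem_filter, mem_univ, true_and]
      exact le_antisymm h2 h1
    have := Finset.card_le_card hsub
    rw [Fin.card_Iic] at this
    simp only [Fin.val_mk] at this
    omega

/-- Case `d ≥ 2`: consing `i` onto a tuple. -/
lemma cons_valid_iff_ge2 {D d n L : ℕ} (hd2 : 2 ≤ d) (hdD : d ≤ D) (i : Fin L)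
    (ι : Fin (n + 1) → Fin L) :
    ValidTuple D (Fin.cons i ι) d i ↔ ValidTuple D ι (d - 1) i := by
  constructor
  · rintro ⟨hmono, hcard, hdl, hlead, hne⟩
    rw [monotone_cons_iff] at hmono
    refine ⟨hmono.2, ?_, by omega, ?_, ?_⟩
    · intro v
      have h1 : cnt (Fin.cons i ι) v ≤ D := hcard v
      rw [cnt_cons] at h1
      show cnt ι v ≤ D
      omega
    · intro r hr
      have : ((r.succ : Fin (n + 2)) : ℕ) < d := by simp; omega
      have := hlead r.succ this
      rwa [Fin.cons_succ] at this
    · intro hlt heq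
      have hd1 : d - 1 + 1 = d := by omega
      have hlt' : d < n + 2 := by omega
      refine hne hlt' ?_
      have : (⟨d, hlt'⟩ : Fin (n + 2)) = (⟨d - 1, hlt⟩ : Fin (n + 1)).succ := by
        simp [Fin.ext_iff]; omega
      rw [this, Fin.cons_succ, heq]
  · rintro ⟨hmono, hcard, hdl, hlead, hne⟩
    have h0 : ι 0 = i := hlead 0 (by simp; omega)
    have h0' : (0 : Fin (n+1)).val < d - 1 := by simp; omega
    have hcnti : cnt ι i = d - 1 := valid_cnt ⟨hmono, hcard, hdl, hlead, hne⟩ (by omega)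
    refine ⟨monotone_cons_iff.mpr ⟨le_of_eq h0.symm, hmono⟩, ?_, by omega, ?_, ?_⟩
    · intro v
      show cnt (Fin.cons i ι) v ≤ D
      rw [cnt_cons]
      by_cases hv : i = v
      · rw [if_pos hv, ← hv, hcnti]; omega
      · rw [if_neg hv]
        have h1 : cnt ι v ≤ D := hcard v
        omega
    · intro r hr
      rcases Fin.eq_zero_or_eq_succ r with h | ⟨r', rfl⟩
      · rw [h, Fin.cons_zero]
      · rw [Fin.cons_succ]
        apply hlead
        have : (r'.succ : Fin (n+2)).val = r'.val + 1 := rfl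
        omega
    · intro hlt heq
      have hlt' : d - 1 < n + 1 := by omega
      refine hne hlt' ?_
      have : (⟨d, hlt⟩ : Fin (n + 2)) = (⟨d - 1, hlt'⟩ : Fin (n + 1)).succ := by
        simp [Fin.ext_iff]; omega
      rw [this, Fin.cons_succ] at heq
      exact heq

/-- Case `d = 1`: consing `i` onto a tuple. -/
lemma cons_valid_iff_one {D n L : ℕ} (hD : 1 ≤ D) (i : Fin L) (ι : Fin (n + 1) → Fin L) :
    ValidTuple D (Fin.cons i ι) 1 i ↔
      Monotone ι ∧ (∀ v : Fin L, cnt ι v ≤ D) ∧ i < ι 0 := by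
  constructor
  · rintro ⟨hmono, hcard, hdl, hlead, hne⟩
    rw [monotone_cons_iff] at hmono
    have hne1 : ι 0 ≠ i := by
      have h1 : (1 : ℕ) < n + 2 := by omega
      have := hne h1
      have he : (⟨1, h1⟩ : Fin (n + 2)) = (0 : Fin (n + 1)).succ := rfl
      rwa [he, Fin.cons_succ] at this
    refine ⟨hmono.2, ?_, lt_of_le_of_ne hmono.1 (fun h => hne1 h.symm)⟩
    intro v
    have h1 : cnt (Fin.cons i ι) v ≤ D := hcard v
    rw [cnt_cons] at h1
    omega
  · rintro ⟨hmono, hcard, hlt⟩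
    have hne0 : ∀ r, ι r ≠ i := by
      intro r h
      have : ι 0 ≤ ι r := hmono (Fin.zero_le r)
      rw [h] at this
      exact absurd hlt (not_lt.mpr this)
    refine ⟨monotone_cons_iff.mpr ⟨le_of_lt hlt, hmono⟩, ?_, by omega, ?_, ?_⟩
    · intro v
      show cnt (Fin.cons i ι) v ≤ D
      rw [cnt_cons]
      by_cases hv : i = v
      · rw [if_pos hv]
        have : cnt ι v = 0 := by
          rw [cnt, Finset.card_eq_zero, Finset.filter_eq_empty_iff]
          intro r _
          rw [← hv]
          exact hne0 r
        rw [this]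
        omega
      · rw [if_neg hv]
        have := hcard v
        omega
    · intro r hr
      have : r = 0 := by
        apply Fin.ext
        simp only [Fin.val_zero]
        omega
      rw [this, Fin.cons_zero]
    · intro hlt' heq
      have : (⟨1, hlt'⟩ : Fin (n + 2)) = (0 : Fin (n + 1)).succ := rfl
      rw [this, Fin.cons_succ] at heq
      exact hne0 0 heq

-- head sets
noncomputable def headSet (D d : ℕ) {L : ℕ} (i : Fin L) : Finset (Fin L × ℕ) :=
  if d = 1 then (Finset.univ.filter (fun i' => i < i')) ×ˢ Finset.Icc 1 D
  else {(i, d - 1)}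

open Classical in
lemma head_card {D d n L : ℕ} (hD : 1 ≤ D) (hd : 1 ≤ d) (hdD : d ≤ D) (i : Fin L)
    (ι : Fin (n + 1) → Fin L) :
    ((headSet D d i).filter (fun q => ValidTuple D ι q.2 q.1)).card
      = if ValidTuple D (Fin.cons i ι) d i then 1 else 0 := by
  rcases eq_or_lt_of_le hd with h1 | h2
  · -- d = 1
    rw [headSet, if_pos h1.symm, ← h1]
    by_cases hv : ValidTuple D (Fin.cons i ι) 1 i
    · rw [if_pos hv]
      obtain ⟨hmono, hcard, hlt⟩ := (cons_valid_iff_one hD i ι).mp hv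
      rw [Finset.card_eq_one]
      refine ⟨(ι 0, cnt ι (ι 0)), ?_⟩
      rw [Finset.eq_singleton_iff_unique_mem]
      constructor
      · rw [Finset.mem_filter]
        refine ⟨?_, valid_head hmono hcard⟩
        rw [Finset.mem_product]
        refine ⟨by simpa using hlt, ?_⟩
        rw [Finset.mem_Icc]
        exact ⟨cnt_pos_head ι, hcard (ι 0)⟩
      · rintro ⟨i', e⟩ hq
        rw [Finset.mem_filter, Finset.mem_product, Finset.mem_Icc] at hq
        obtain ⟨⟨_, he1, _⟩, hval⟩ := hq
        have hi' : i' = ι 0 := (hval.2.2.2.1 0 (by simp only [Fin.val_zero]; omega)).symm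
        have : cnt ι i' = e := valid_cnt hval he1
        simp [hi', ← this]
    · rw [if_neg hv, Finset.card_eq_zero, Finset.filter_eq_empty_iff]
      rintro ⟨i', e⟩ hq hval
      rw [Finset.mem_product, Finset.mem_Icc] at hq
      obtain ⟨hi'', he1, heD⟩ := hq
      simp only [Finset.mem_filter, Finset.mem_univ, true_and] at hi''
      apply hv
      rw [cons_valid_iff_one hD i ι]
      have hi0 : ι 0 = i' := hval.2.2.2.1 0 (by simp only [Fin.val_zero]; omega)
      exact ⟨hval.1, hval.2.1, by rwa [hi0]⟩
  · -- d ≥ 2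
    rw [headSet, if_neg (by omega), Finset.filter_singleton]
    by_cases hval : ValidTuple D ι (d - 1) i
    · rw [if_pos hval, if_pos ((cons_valid_iff_ge2 h2 hdD i ι).mpr hval), Finset.card_singleton]
    · rw [if_neg hval, if_neg (fun h => hval ((cons_valid_iff_ge2 h2 hdD i ι).mp h)),
        Finset.card_empty]

open Classical in
lemma valid_one_iff {D d L : ℕ} (hD : 1 ≤ D) (hd : 1 ≤ d) (i : Fin L) (ι : Fin 1 → Fin L) :
    ValidTuple D ι d i ↔ d = 1 ∧ ι = fun _ => i := by
  constructor
  · rintro ⟨hmono, hcard, hdl, hlead, hne⟩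
    have hd1 : d = 1 := le_antisymm hdl hd
    refine ⟨hd1, funext fun r => ?_⟩
    have : r = 0 := Subsingleton.elim r 0
    rw [this]
    exact hlead 0 (by simp only [Fin.val_zero]; omega)
  · rintro ⟨rfl, rfl⟩
    refine ⟨monotone_const, ?_, le_refl 1, fun r _ => rfl, fun h => absurd h (by omega)⟩
    intro v
    exact le_trans (Finset.card_filter_le _ _) (by simp [hD])

lemma tupleFact_one {L : ℕ} (i : Fin L) : tupleFact (fun _ : Fin 1 => i) = 1 := by
  rw [tupleFact_eq]
  apply Finset.prod_eq_one
  intro v _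
  have h := cnt_le (fun _ : Fin 1 => i) v
  rcases Nat.le_one_iff_eq_zero_or_eq_one.mp h with h1 | h1 <;> rw [h1] <;> rfl

open Classical in
lemma base_sum {D d d' L L' : ℕ} (hD : 1 ≤ D) (hd : 1 ≤ d) (hd' : 1 ≤ d')
    (g : Fin L → Fin L' → ℝ) (i : Fin L) (j : Fin L') :
    (∑ p ∈ Finset.univ.filter
        (fun p : (Fin 1 → Fin L) × (Fin 1 → Fin L') =>
          ValidTuple D p.1 d i ∧ ValidTuple D p.2 d' j),
      ((tupleFact p.1 : ℝ) * (tupleFact p.2 : ℝ))⁻¹ * ∏ r, g (p.1 r) (p.2 r))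
      = if d = 1 ∧ d' = 1 then g i j else 0 := by
  by_cases h : d = 1 ∧ d' = 1
  · rw [if_pos h]
    have hfil : Finset.univ.filter
        (fun p : (Fin 1 → Fin L) × (Fin 1 → Fin L') =>
          ValidTuple D p.1 d i ∧ ValidTuple D p.2 d' j)
        = {((fun _ => i), (fun _ => j))} := by
      ext p
      simp only [Finset.mem_filter, Finset.mem_univ, true_and, Finset.mem_singleton,
        valid_one_iff hD hd, valid_one_iff hD hd', Prod.ext_iff]
      tauto
    rw [hfil, Finset.sum_singleton]
    simp [tupleFact_one]
  · rw [if_neg h]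
    apply Finset.sum_eq_zero
    intro p hp
    rw [Finset.mem_filter] at hp
    exfalso
    exact h ⟨((valid_one_iff hD hd i p.1).mp hp.2.1).1,
      ((valid_one_iff hD hd' j p.2).mp hp.2.2).1⟩

lemma tupleFact_pos {ℓ L : ℕ} (ι : Fin ℓ → Fin L) : 0 < tupleFact ι := by
  rw [tupleFact_eq]
  exact Finset.prod_pos (fun v _ => Nat.factorial_pos _)

open Classical in
lemma step_sum {D d d' n L L' : ℕ} (hD : 1 ≤ D) (hd : 1 ≤ d) (hdD : d ≤ D)
    (hd' : 1 ≤ d') (hd'D : d' ≤ D)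
    (g : Fin L → Fin L' → ℝ) (i : Fin L) (j : Fin L') :
    (∑ p ∈ Finset.univ.filter
        (fun p : (Fin (n + 2) → Fin L) × (Fin (n + 2) → Fin L') =>
          ValidTuple D p.1 d i ∧ ValidTuple D p.2 d' j),
      ((tupleFact p.1 : ℝ) * (tupleFact p.2 : ℝ))⁻¹ * ∏ r, g (p.1 r) (p.2 r))
      = ((d : ℝ) * (d' : ℝ))⁻¹ * g i j *
          ∑ q ∈ headSet D d i, ∑ q' ∈ headSet D d' j,
            ∑ p ∈ Finset.univ.filter
              (fun p : (Fin (n + 1) → Fin L) × (Fin (n + 1) → Fin L') =>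
                ValidTuple D p.1 q.2 q.1 ∧ ValidTuple D p.2 q'.2 q'.1),
              ((tupleFact p.1 : ℝ) * (tupleFact p.2 : ℝ))⁻¹ * ∏ r, g (p.1 r) (p.2 r) := by
  -- abbreviate the weight at length n+1
  set w : (Fin (n + 1) → Fin L) × (Fin (n + 1) → Fin L') → ℝ :=
    fun p => ((tupleFact p.1 : ℝ) * (tupleFact p.2 : ℝ))⁻¹ * ∏ r, g (p.1 r) (p.2 r) with hw
  -- Step 1: collapse the triple sum on the RHS
  have hRHS : (∑ q ∈ headSet D d i, ∑ q' ∈ headSet D d' j,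
        ∑ p ∈ Finset.univ.filter
          (fun p : (Fin (n + 1) → Fin L) × (Fin (n + 1) → Fin L') =>
            ValidTuple D p.1 q.2 q.1 ∧ ValidTuple D p.2 q'.2 q'.1), w p)
      = ∑ p ∈ Finset.univ.filter
          (fun p : (Fin (n + 1) → Fin L) × (Fin (n + 1) → Fin L') =>
            ValidTuple D (Fin.cons i p.1) d i ∧ ValidTuple D (Fin.cons j p.2) d' j), w p := by
    rw [Finset.sum_filter]
    simp only [Finset.sum_filter]
    rw [Finset.sum_congr rfl (fun q _ => Finset.sum_comm), Finset.sum_comm]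
    apply Finset.sum_congr rfl
    intro p _
    have hsplit : ∀ (q : Fin L × ℕ) (q' : Fin L' × ℕ),
        (if ValidTuple D p.1 q.2 q.1 ∧ ValidTuple D p.2 q'.2 q'.1 then w p else 0)
          = (if ValidTuple D p.1 q.2 q.1 then (1:ℝ) else 0)
            * ((if ValidTuple D p.2 q'.2 q'.1 then (1:ℝ) else 0) * w p) := by
      intro q q'
      by_cases h1 : ValidTuple D p.1 q.2 q.1 <;> by_cases h2 : ValidTuple D p.2 q'.2 q'.1 <;>
        simp [h1, h2]
    calc ∑ q ∈ headSet D d i, ∑ q' ∈ headSet D d' j,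
          (if ValidTuple D p.1 q.2 q.1 ∧ ValidTuple D p.2 q'.2 q'.1 then w p else 0)
        = ∑ q ∈ headSet D d i, ∑ q' ∈ headSet D d' j,
            (if ValidTuple D p.1 q.2 q.1 then (1:ℝ) else 0)
              * ((if ValidTuple D p.2 q'.2 q'.1 then (1:ℝ) else 0) * w p) := by
          exact Finset.sum_congr rfl fun q _ => Finset.sum_congr rfl fun q' _ => hsplit q q'
      _ = ∑ q ∈ headSet D d i,
            (if ValidTuple D p.1 q.2 q.1 then (1:ℝ) else 0)
              * ((∑ q' ∈ headSet D d' j, (if ValidTuple D p.2 q'.2 q'.1 then (1:ℝ) else 0))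
                  * w p) := by
          refine Finset.sum_congr rfl fun q _ => ?_
          rw [← Finset.mul_sum, ← Finset.sum_mul]
      _ = (if ValidTuple D (Fin.cons i p.1) d i then w p else 0)
            * if ValidTuple D (Fin.cons j p.2) d' j then 1 else 0 := by
          have hc1 : (∑ q ∈ headSet D d i, (if ValidTuple D p.1 q.2 q.1 then (1:ℝ) else 0))
              = if ValidTuple D (Fin.cons i p.1) d i then (1:ℝ) else 0 := by
            rw [Finset.sum_boole, head_card hD hd hdD i p.1]
            split <;> simp
          have hc2 : (∑ q' ∈ headSet D d' j, (if ValidTuple D p.2 q'.2 q'.1 then (1:ℝ) else 0))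
              = if ValidTuple D (Fin.cons j p.2) d' j then (1:ℝ) else 0 := by
            rw [Finset.sum_boole, head_card hD hd' hd'D j p.2]
            split <;> simp
          rw [← Finset.sum_mul, hc2, hc1]
          by_cases h1 : ValidTuple D (Fin.cons i p.1) d i <;>
            by_cases h2 : ValidTuple D (Fin.cons j p.2) d' j <;> simp [h1, h2] <;> ring
      _ = if ValidTuple D (Fin.cons i p.1) d i ∧ ValidTuple D (Fin.cons j p.2) d' j
            then w p else 0 := by
          by_cases h1 : ValidTuple D (Fin.cons i p.1) d i <;>
            by_cases h2 : ValidTuple D (Fin.cons j p.2) d' j <;> simp [h1, h2]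
  rw [hRHS, Finset.mul_sum]
  -- Step 2: the bijection p ↦ (tail p.1, tail p.2)
  apply Finset.sum_nbij' (i := fun p => (Fin.tail p.1, Fin.tail p.2))
    (j := fun p => (Fin.cons i p.1, Fin.cons j p.2))
  · intro p hp
    rw [Finset.mem_filter] at hp ⊢
    obtain ⟨_, h1, h2⟩ := hp
    have e1 : Fin.cons i (Fin.tail p.1) = p.1 := by
      have h0 : p.1 0 = i := h1.2.2.2.1 0 (by simp only [Fin.val_zero]; omega)
      rw [← h0]; exact Fin.cons_self_tail p.1
    have e2 : Fin.cons j (Fin.tail p.2) = p.2 := by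
      have h0 : p.2 0 = j := h2.2.2.2.1 0 (by simp only [Fin.val_zero]; omega)
      rw [← h0]; exact Fin.cons_self_tail p.2
    refine ⟨Finset.mem_univ _, ?_, ?_⟩
    · show ValidTuple D (Fin.cons i (Fin.tail p.1)) d i
      rw [e1]; exact h1
    · show ValidTuple D (Fin.cons j (Fin.tail p.2)) d' j
      rw [e2]; exact h2
  · intro p hp
    rw [Finset.mem_filter] at hp ⊢
    exact ⟨Finset.mem_univ _, hp.2⟩
  · intro p hp
    rw [Finset.mem_filter] at hp
    obtain ⟨_, h1, h2⟩ := hp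
    have h01 : p.1 0 = i := h1.2.2.2.1 0 (by simp only [Fin.val_zero]; omega)
    have h02 : p.2 0 = j := h2.2.2.2.1 0 (by simp only [Fin.val_zero]; omega)
    show (Fin.cons i (Fin.tail p.1), Fin.cons j (Fin.tail p.2)) = p
    have e1 : Fin.cons i (Fin.tail p.1) = p.1 := by rw [← h01]; exact Fin.cons_self_tail p.1
    have e2 : Fin.cons j (Fin.tail p.2) = p.2 := by rw [← h02]; exact Fin.cons_self_tail p.2
    rw [e1, e2]
  · intro p hp
    simp only [Fin.tail_cons]
  · intro p hp
    rw [Finset.mem_filter] at hp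
    obtain ⟨_, h1, h2⟩ := hp
    have h01 : p.1 0 = i := h1.2.2.2.1 0 (by simp only [Fin.val_zero]; omega)
    have h02 : p.2 0 = j := h2.2.2.2.1 0 (by simp only [Fin.val_zero]; omega)
    have e1 : Fin.cons i (Fin.tail p.1) = p.1 := by rw [← h01]; exact Fin.cons_self_tail p.1
    have e2 : Fin.cons j (Fin.tail p.2) = p.2 := by rw [← h02]; exact Fin.cons_self_tail p.2
    -- compute the factorials
    have hc1 : (tupleFact p.1 : ℝ) = (d : ℝ) * (tupleFact (Fin.tail p.1) : ℝ) := by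
      have hcnt : cnt p.1 i = d := valid_cnt h1 hd
      have : cnt (Fin.cons i (Fin.tail p.1)) i = d := by rw [e1]; exact hcnt
      rw [cnt_cons, if_pos rfl] at this
      have hf : tupleFact p.1 = d * tupleFact (Fin.tail p.1) := by
        conv_lhs => rw [← e1]
        rw [tupleFact_cons]
        congr 1
        omega
      rw [hf]
      push_cast
      ring
    have hc2 : (tupleFact p.2 : ℝ) = (d' : ℝ) * (tupleFact (Fin.tail p.2) : ℝ) := by
      have hcnt : cnt p.2 j = d' := valid_cnt h2 hd'
      have : cnt (Fin.cons j (Fin.tail p.2)) j = d' := by rw [e2]; exact hcnt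
      rw [cnt_cons, if_pos rfl] at this
      have hf : tupleFact p.2 = d' * tupleFact (Fin.tail p.2) := by
        conv_lhs => rw [← e2]
        rw [tupleFact_cons]
        congr 1
        omega
      rw [hf]
      push_cast
      ring
    have hprod : (∏ r, g (p.1 r) (p.2 r))
        = g i j * ∏ r, g (Fin.tail p.1 r) (Fin.tail p.2 r) := by
      conv_lhs => rw [← e1, ← e2]
      rw [Fin.prod_univ_succ]
      simp [Fin.cons_zero, Fin.cons_succ, Fin.tail]
    rw [hw]
    simp only
    rw [hc1, hc2, hprod]
    ring

open Classical in
lemma master_lemma {D L L' : ℕ} (hD : 1 ≤ D) (g : Fin L → Fin L' → ℝ) (m : ℕ) (hm : 2 ≤ m)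
    (d d' : ℕ) (hd : 1 ≤ d) (hdD : d ≤ D) (hd' : 1 ≤ d') (hd'D : d' ≤ D)
    (i : Fin L) (j : Fin L') :
    dpArray D g m d d' i j
      = g i j * ((if d = 1 ∧ d' = 1 then 1 else 0)
          + ((d : ℝ) * (d' : ℝ))⁻¹ * ∑ q ∈ headSet D d i, ∑ q' ∈ headSet D d' j,
              dpArray D g (m - 1) q.2 q'.2 q.1 q'.1) := by
  rw [dpArray]
  have hsplit : Finset.Icc 1 m = insert 1 (Finset.Icc 2 m) := by
    ext x; simp only [Finset.mem_Icc, Finset.mem_insert]; omega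
  rw [hsplit, Finset.sum_insert (by simp)]
  have himg : Finset.Icc 2 m = (Finset.Icc 1 (m - 1)).image (· + 1) := by
    ext x
    simp only [Finset.mem_Icc, Finset.mem_image]
    constructor
    · intro h; exact ⟨x - 1, by omega, by omega⟩
    · rintro ⟨y, hy, rfl⟩; omega
  rw [himg, Finset.sum_image (by intro x _ y _ h; have h' : x + 1 = y + 1 := h; omega)]
  have hstep : ∀ ℓ' ∈ Finset.Icc 1 (m - 1),
      (∑ p ∈ Finset.univ.filter
          (fun p : (Fin (ℓ' + 1) → Fin L) × (Fin (ℓ' + 1) → Fin L') =>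
            ValidTuple D p.1 d i ∧ ValidTuple D p.2 d' j),
        ((tupleFact p.1 : ℝ) * (tupleFact p.2 : ℝ))⁻¹ * ∏ r, g (p.1 r) (p.2 r))
      = ((d : ℝ) * (d' : ℝ))⁻¹ *
          ∑ q ∈ headSet D d i, ∑ q' ∈ headSet D d' j, g i j *
            ∑ p ∈ Finset.univ.filter
              (fun p : (Fin ℓ' → Fin L) × (Fin ℓ' → Fin L') =>
                ValidTuple D p.1 q.2 q.1 ∧ ValidTuple D p.2 q'.2 q'.1),
              ((tupleFact p.1 : ℝ) * (tupleFact p.2 : ℝ))⁻¹ * ∏ r, g (p.1 r) (p.2 r) := by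
    intro ℓ' hl'
    rw [Finset.mem_Icc] at hl'
    obtain ⟨n, rfl⟩ : ∃ n, ℓ' = n + 1 := ⟨ℓ' - 1, by omega⟩
    rw [step_sum hD hd hdD hd' hd'D g i j, mul_assoc]
    congr 1
    rw [Finset.mul_sum]
    apply Finset.sum_congr rfl
    intro q _
    rw [Finset.mul_sum]
  rw [Finset.sum_congr rfl hstep, base_sum hD hd hd' g i j]
  rw [← Finset.mul_sum]
  have hswap : (∑ ℓ' ∈ Finset.Icc 1 (m - 1),
      ∑ q ∈ headSet D d i, ∑ q' ∈ headSet D d' j, g i j *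
        ∑ p ∈ Finset.univ.filter
          (fun p : (Fin ℓ' → Fin L) × (Fin ℓ' → Fin L') =>
            ValidTuple D p.1 q.2 q.1 ∧ ValidTuple D p.2 q'.2 q'.1),
          ((tupleFact p.1 : ℝ) * (tupleFact p.2 : ℝ))⁻¹ * ∏ r, g (p.1 r) (p.2 r))
      = g i j * ∑ q ∈ headSet D d i, ∑ q' ∈ headSet D d' j,
          dpArray D g (m - 1) q.2 q'.2 q.1 q'.1 := by
    rw [Finset.mul_sum]
    rw [Finset.sum_comm]
    apply Finset.sum_congr rfl
    intro q _
    rw [Finset.mul_sum]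
    rw [Finset.sum_comm]
    apply Finset.sum_congr rfl
    intro q' _
    rw [dpArray, Finset.mul_sum]
  rw [hswap]
  by_cases h : d = 1 ∧ d' = 1
  · rw [if_pos h, if_pos h]; ring
  · rw [if_neg h, if_neg h]; ring

/-- Correctness of the recursion for the higher order sequential kernel
(the four recursion equalities of the paper's dynamic-programming algorithm). -/
theorem dpArray_recursion (D : ℕ) (hD : 1 ≤ D) (L L' : ℕ) (hL : 0 < L) (hL' : 0 < L')
    (g : Fin L → Fin L' → ℝ) (m : ℕ) (hm : 2 ≤ m) (i : Fin L) (j : Fin L') :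
    (dpArray D g m 1 1 i j
        = g i j * (1 + ∑ i' ∈ Finset.univ.filter (fun i' => i < i'),
            ∑ j' ∈ Finset.univ.filter (fun j' => j < j'),
              ∑ d ∈ Finset.Icc 1 D, ∑ d' ∈ Finset.Icc 1 D,
                dpArray D g (m - 1) d d' i' j')) ∧
    (∀ d, 2 ≤ d → d ≤ D →
      dpArray D g m d 1 i j
        = (d : ℝ)⁻¹ * g i j * ∑ j' ∈ Finset.univ.filter (fun j' => j < j'),
            ∑ κ ∈ Finset.Icc 1 D, dpArray D g (m - 1) (d - 1) κ i j') ∧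
    (∀ d', 2 ≤ d' → d' ≤ D →
      dpArray D g m 1 d' i j
        = (d' : ℝ)⁻¹ * g i j * ∑ i' ∈ Finset.univ.filter (fun i' => i < i'),
            ∑ κ ∈ Finset.Icc 1 D, dpArray D g (m - 1) κ (d' - 1) i' j) ∧
    (∀ d d', 2 ≤ d → d ≤ D → 2 ≤ d' → d' ≤ D →
      dpArray D g m d d' i j
        = ((d : ℝ) * (d' : ℝ))⁻¹ * g i j * dpArray D g (m - 1) (d - 1) (d' - 1) i j) := by
  refine ⟨?_, ?_, ?_, ?_⟩
  · rw [master_lemma hD g m hm 1 1 le_rfl hD le_rfl hD i j]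
    have h1 : headSet D 1 i = (Finset.univ.filter (fun i' => i < i')) ×ˢ Finset.Icc 1 D := by
      rw [headSet, if_pos rfl]
    have h2 : headSet D 1 j = (Finset.univ.filter (fun j' => j < j')) ×ˢ Finset.Icc 1 D := by
      rw [headSet, if_pos rfl]
    rw [h1, h2, if_pos ⟨rfl, rfl⟩]
    simp only [Nat.cast_one, mul_one, inv_one, one_mul]
    congr 1
    congr 1
    rw [Finset.sum_product]
    refine Finset.sum_congr rfl fun i' _ => ?_
    rw [Finset.sum_comm, Finset.sum_product]
    refine Finset.sum_congr rfl fun j' _ => ?_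
    rw [Finset.sum_comm]
  · intro d hd2 hdD
    rw [master_lemma hD g m hm d 1 (by omega) hdD le_rfl hD i j]
    have h1 : headSet D d i = {(i, d - 1)} := by rw [headSet, if_neg (by omega)]
    have h2 : headSet D 1 j = (Finset.univ.filter (fun j' => j < j')) ×ˢ Finset.Icc 1 D := by
      rw [headSet, if_pos rfl]
    rw [h1, h2, Finset.sum_singleton, if_neg (by omega), Finset.sum_product]
    simp only [Nat.cast_one, mul_one]
    ring
  · intro d' hd2 hdD
    rw [master_lemma hD g m hm 1 d' le_rfl hD (by omega) hdD i j]
    have h1 : headSet D 1 i = (Finset.univ.filter (fun i' => i < i')) ×ˢ Finset.Icc 1 D := by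
      rw [headSet, if_pos rfl]
    have h2 : headSet D d' j = {(j, d' - 1)} := by rw [headSet, if_neg (by omega)]
    rw [h1, h2, if_neg (by omega), Finset.sum_product]
    simp only [Finset.sum_singleton, Nat.cast_one, one_mul]
    ring
  · intro d d' hd2 hdD hd'2 hd'D
    rw [master_lemma hD g m hm d d' (by omega) hdD (by omega) hd'D i j]
    have h1 : headSet D d i = {(i, d - 1)} := by rw [headSet, if_neg (by omega)]
    have h2 : headSet D d' j = {(j, d' - 1)} := by rw [headSet, if_neg (by omega)]
    rw [h1, h2, Finset.sum_singleton, Finset.sum_singleton, if_neg (by omega)]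
    ring
end

section
/- Let X be a set, let k : X × X → ℝ be a symmetric positive semidefinite kernel, and let D, M ∈ ℕ with D ≥ 1. For finite sequences σ = (σ_0, …, σ_L) and τ = (τ_0, …, τ_{L'}) in X define the increment kernel ∇k(σ,τ)(i,j) = k(σ_i, τ_j) + k(σ_{i−1}, τ_{j−1}) − k(σ_{i−1}, τ_j) − k(σ_i, τ_{j−1}) for 1 ≤ i ≤ L, 1 ≤ j ≤ L', and define the order-D sequentialization truncated at level M by k⁺_{(D),M}(σ,τ) = Σ_{(𝐢,𝐣)} (1/(𝐢!·𝐣!)) · ∏_{r=1}^{m} ∇k(σ,τ)(i_r, j_r), where the sum ranges over all pairs (𝐢,𝐣) of weakly increasing tuples of the same length m with 0 ≤ m ≤ M, 𝐢 with values in {1,…,L} and 𝐣 with values in {1,…,L'}, in each of which every value occurs at most D times (the empty pair contributing 1). Then k⁺_{(D),M} is a symmetric positive semidefinite kernel on the set of finite sequences in X: for every n, every sequences σ^{(1)}, …, σ^{(n)} and every c_1, …, c_n ∈ ℝ, one has Σ_{a,b=1}^{n} c_a c_b · k⁺_{(D),M}(σ^{(a)}, σ^{(b)}) ≥ 0. 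-/
open Classical Finset in
/-- The order-`D` sequentialization of a kernel `k`, truncated at level `M`:
`k⁺_{(D),M}(σ,τ) = ∑_{m=0}^{M} ∑_{(𝐢,𝐣)} (1/(𝐢!·𝐣!)) ∏_r ∇k(σ,τ)(i_r,j_r)`, the sum
ranging over pairs of weakly increasing tuples of equal length `m` in which each
value occurs at most `D` times. -/
noncomputable def seqKernelHigher {X : Type*} (k : X → X → ℝ) (D M : ℕ) {L L' : ℕ}
    (σ : Fin (L + 1) → X) (τ : Fin (L' + 1) → X) : ℝ :=
  ∑ m ∈ Finset.range (M + 1),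
    ∑ ι ∈ Finset.univ.filter (fun ι : Fin m → Fin L =>
        Monotone ι ∧ ∀ v, (Finset.univ.filter (fun r => ι r = v)).card ≤ D),
      ∑ κ ∈ Finset.univ.filter (fun κ : Fin m → Fin L' =>
          Monotone κ ∧ ∀ v, (Finset.univ.filter (fun r => κ r = v)).card ≤ D),
        ((tupleFact ι : ℝ) * (tupleFact κ : ℝ))⁻¹ * ∏ r, incKernel k σ τ (ι r) (κ r)

/-- Abstract positive semidefiniteness of a kernel, via quadratic forms over `Fin n`. -/
def IsPSDK {Y : Type*} (K : Y → Y → ℝ) : Prop :=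
  ∀ (n : ℕ) (y : Fin n → Y) (c : Fin n → ℝ),
    0 ≤ ∑ a, ∑ b, c a * c b * K (y a) (y b)

lemma IsPSDK.fintype {Y : Type*} {K : Y → Y → ℝ} (hK : IsPSDK K) (T : Type*) [Fintype T]
    (y : T → Y) (c : T → ℝ) : 0 ≤ ∑ a, ∑ b, c a * c b * K (y a) (y b) := by
  classical
  let e := (Fintype.equivFin T).symm
  have h := hK (Fintype.card T) (fun a => y (e a)) (fun a => c (e a))
  have heq : ∑ a, ∑ b, c a * c b * K (y a) (y b)
      = ∑ a, ∑ b, (fun a => c (e a)) a * (fun a => c (e a)) b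
          * K ((fun a => y (e a)) a) ((fun a => y (e a)) b) := by
    rw [← Equiv.sum_comp e (fun a => ∑ b, c a * c b * K (y a) (y b))]
    exact Finset.sum_congr rfl fun a _ =>
      (Equiv.sum_comp e (fun b => c (e a) * c b * K (y (e a)) (y b))).symm
  rw [heq]; exact h

lemma IsPSDK.comp {Y Z : Type*} {K : Y → Y → ℝ} (hK : IsPSDK K) (g : Z → Y) :
    IsPSDK (fun z w => K (g z) (g w)) := fun n y c => hK n (fun a => g (y a)) c

lemma isPSDK_one {Y : Type*} : IsPSDK (fun _ _ : Y => (1 : ℝ)) := by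
  intro n y c
  have : ∑ a, ∑ b, c a * c b * 1 = (∑ a, c a) ^ 2 := by
    rw [sq, Finset.sum_mul_sum]
    simp
  rw [this]; positivity

lemma IsPSDK.prod {Y Z : Type*} {K1 : Y → Y → ℝ} {K2 : Z → Z → ℝ}
    (h1 : IsPSDK K1) (hs : ∀ a b, K1 a b = K1 b a) (h2 : IsPSDK K2) :
    IsPSDK (fun p q : Y × Z => K1 p.1 q.1 * K2 p.2 q.2) := by
  intro n y c
  classical
  set A : Matrix (Fin n) (Fin n) ℝ := Matrix.of fun a b => K1 (y a).1 (y b).1 with hA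
  have hpsd : A.PosSemidef := by
    refine Matrix.PosSemidef.of_dotProduct_mulVec_nonneg ?_ ?_
    · ext a b
      simp only [Matrix.conjTranspose_apply, star_trivial, hA, Matrix.of_apply]
      exact hs _ _
    · intro x
      have h := h1 n (fun a => (y a).1) x
      have e : dotProduct (star x) (A.mulVec x) = ∑ a, ∑ b, x a * x b * K1 (y a).1 (y b).1 := by
        simp only [dotProduct, Matrix.mulVec, star_trivial, Finset.mul_sum, hA,
          Matrix.of_apply, dotProduct]
        exact Finset.sum_congr rfl fun a _ => Finset.sum_congr rfl fun b _ => by ring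
      rw [e]; exact h
  obtain ⟨B, hB⟩ : ∃ B : Matrix (Fin n) (Fin n) ℝ, A = B.conjTranspose * B := by
    open scoped MatrixOrder in
    simpa [Matrix.star_eq_conjTranspose] using
      CStarAlgebra.nonneg_iff_eq_star_mul_self.mp hpsd.nonneg
  have hAapp : ∀ a b, K1 (y a).1 (y b).1 = ∑ t, B t a * B t b := by
    intro a b
    have : A a b = (B.conjTranspose * B) a b := by rw [hB]
    simpa [Matrix.mul_apply, Matrix.conjTranspose_apply, hA] using this
  have key : ∑ a, ∑ b, c a * c b * (K1 (y a).1 (y b).1 * K2 (y a).2 (y b).2)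
      = ∑ t, ∑ a, ∑ b, (B t a * c a) * (B t b * c b) * K2 (y a).2 (y b).2 := by
    have hterm : ∀ a b, c a * c b * (K1 (y a).1 (y b).1 * K2 (y a).2 (y b).2)
        = ∑ t, (B t a * c a) * (B t b * c b) * K2 (y a).2 (y b).2 := by
      intro a b
      rw [hAapp, Finset.sum_mul, Finset.mul_sum]
      exact Finset.sum_congr rfl fun t _ => by ring
    calc ∑ a, ∑ b, c a * c b * (K1 (y a).1 (y b).1 * K2 (y a).2 (y b).2)
        = ∑ a, ∑ b, ∑ t, (B t a * c a) * (B t b * c b) * K2 (y a).2 (y b).2 := by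
          exact Finset.sum_congr rfl fun a _ => Finset.sum_congr rfl fun b _ => hterm a b
      _ = ∑ a, ∑ t, ∑ b, (B t a * c a) * (B t b * c b) * K2 (y a).2 (y b).2 :=
          Finset.sum_congr rfl fun a _ => Finset.sum_comm
      _ = ∑ t, ∑ a, ∑ b, (B t a * c a) * (B t b * c b) * K2 (y a).2 (y b).2 :=
          Finset.sum_comm
  rw [key]
  exact Finset.sum_nonneg fun t _ => h2 n (fun a => (y a).2) (fun a => B t a * c a)

lemma IsPSDK.tensorPow {Y : Type*} {K : Y → Y → ℝ} (hK : IsPSDK K)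
    (hs : ∀ a b, K a b = K b a) :
    ∀ m, IsPSDK (fun f g : Fin m → Y => ∏ r, K (f r) (g r))
  | 0 => by
      intro n y c
      simpa using isPSDK_one (Y := Fin 0 → Y) n y c
  | (m + 1) => by
      have h2 := IsPSDK.tensorPow hK hs m
      have h := (hK.prod hs h2).comp (fun f : Fin (m + 1) → Y => (f 0, fun r => f r.succ))
      intro n y c
      have := h n y c
      refine le_of_le_of_eq this (Finset.sum_congr rfl fun a _ =>
        Finset.sum_congr rfl fun b _ => ?_)
      congr 1
      exact (Fin.prod_univ_succ fun r => K (y a r) (y b r)).symm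

/-- The type of pointed sequences in `X`: a length, a sequence, and an index. -/
abbrev PtdSeq (X : Type*) := Σ L : ℕ, (Fin (L + 1) → X) × Fin L

lemma incKernel_psdk {X : Type*} {k : X → X → ℝ} (hpsd : IsPSDK k) :
    IsPSDK (fun p q : PtdSeq X => incKernel k p.2.1 q.2.1 p.2.2 q.2.2) := by
  intro n y c
  have h := hpsd.fintype (Fin n ⊕ Fin n)
    (Sum.elim (fun a => (y a).2.1 (y a).2.2.succ) (fun a => (y a).2.1 (y a).2.2.castSucc))
    (Sum.elim c (fun a => -c a))
  refine le_of_le_of_eq h ?_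
  simp only [Fintype.sum_sum_type, Sum.elim_inl, Sum.elim_inr]
  rw [← Finset.sum_add_distrib]
  refine Finset.sum_congr rfl fun a _ => ?_
  rw [← Finset.sum_add_distrib, ← Finset.sum_add_distrib, ← Finset.sum_add_distrib]
  refine Finset.sum_congr rfl fun b _ => ?_
  simp only [incKernel]
  ring

lemma incKernel_symm {X : Type*} {k : X → X → ℝ} (hsymm : ∀ x y, k x y = k y x)
    {L L' : ℕ} (σ : Fin (L + 1) → X) (τ : Fin (L' + 1) → X) (i : Fin L) (j : Fin L') :
    incKernel k σ τ i j = incKernel k τ σ j i := by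
  simp only [incKernel]
  rw [hsymm (σ i.succ), hsymm (σ i.castSucc) (τ j.castSucc), hsymm (σ i.castSucc) (τ j.succ),
    hsymm (σ i.succ) (τ j.castSucc)]
  ring

lemma sum_sigma_subtype {n : ℕ} {β : Fin n → Type*} [∀ a, Fintype (β a)]
    (p : ∀ a, β a → Prop) [∀ a, DecidablePred (p a)] (s : ∀ a, Finset (β a))
    (hs : ∀ a x, x ∈ s a ↔ p a x) (f : ∀ a, β a → ℝ) :
    ∑ a, ∑ x ∈ s a, f a x = ∑ t : Σ a, {x // p a x}, f t.1 t.2.1 := by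
  have h1 : ∀ a, ∑ x ∈ s a, f a x = ∑ x : {x // p a x}, f a x.1 := fun a =>
    Finset.sum_subtype (s a) (hs a) (f a)
  simp_rw [h1]
  rw [← Finset.univ_sigma_univ, Finset.sum_sigma]

/-- The higher order truncated sequentialization of a symmetric positive semidefinite
kernel is again a symmetric positive semidefinite kernel on finite sequences. -/
theorem seqKernelHigher_symm_posSemidef {X : Type*} (k : X → X → ℝ)
    (hsymm : ∀ x y, k x y = k y x)
    (hpsd : ∀ (n : ℕ) (x : Fin n → X) (c : Fin n → ℝ),
      0 ≤ ∑ a, ∑ b, c a * c b * k (x a) (x b))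
    (D M : ℕ) (hD : 1 ≤ D) :
    (∀ (L L' : ℕ) (σ : Fin (L + 1) → X) (τ : Fin (L' + 1) → X),
        seqKernelHigher k D M σ τ = seqKernelHigher k D M τ σ) ∧
    (∀ (n : ℕ) (Len : Fin n → ℕ) (σ : ∀ a, Fin (Len a + 1) → X) (c : Fin n → ℝ),
        0 ≤ ∑ a, ∑ b, c a * c b * seqKernelHigher k D M (σ a) (σ b)) := by
  classical
  constructor
  · -- symmetry
    intro L L' σ τ
    unfold seqKernelHigher
    refine Finset.sum_congr rfl fun m _ => ?_
    rw [Finset.sum_comm]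
    refine Finset.sum_congr rfl fun κ0 _ => Finset.sum_congr rfl fun ι0 _ => ?_
    rw [mul_comm (tupleFact ι0 : ℝ)]
    congr 1
    exact Finset.prod_congr rfl fun r _ => incKernel_symm hsymm σ τ (ι0 r) (κ0 r)
  · -- positive semidefiniteness
    intro n Len σ c
    have hk : IsPSDK k := hpsd
    have hKs : ∀ p q : PtdSeq X,
        incKernel k p.2.1 q.2.1 p.2.2 q.2.2 = incKernel k q.2.1 p.2.1 q.2.2 p.2.2 :=
      fun p q => incKernel_symm hsymm _ _ _ _
    have hpow := (incKernel_psdk hk).tensorPow hKs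
    have hterm : ∀ m : ℕ, 0 ≤ ∑ a, ∑ b, c a * c b *
        (∑ ι ∈ Finset.univ.filter (fun ι : Fin m → Fin (Len a) =>
            Monotone ι ∧ ∀ v, (Finset.univ.filter (fun r => ι r = v)).card ≤ D),
          ∑ κ ∈ Finset.univ.filter (fun κ : Fin m → Fin (Len b) =>
              Monotone κ ∧ ∀ v, (Finset.univ.filter (fun r => κ r = v)).card ≤ D),
            ((tupleFact ι : ℝ) * (tupleFact κ : ℝ))⁻¹
              * ∏ r, incKernel k (σ a) (σ b) (ι r) (κ r)) := by
      intro m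
      set P : ∀ a : Fin n, (Fin m → Fin (Len a)) → Prop := fun a ι =>
        Monotone ι ∧ ∀ v, (Finset.univ.filter (fun r => ι r = v)).card ≤ D with hP
      set T := Σ a : Fin n, {ι : Fin m → Fin (Len a) // P a ι} with hT
      set yy : T → (Fin m → PtdSeq X) := fun t r => ⟨Len t.1, (σ t.1, t.2.1 r)⟩ with hyy
      set d : T → ℝ := fun t => c t.1 * ((tupleFact t.2.1 : ℝ))⁻¹ with hd
      have h := (hpow m).fintype T yy d
      refine le_of_le_of_eq h ?_
      have step1 : ∀ a b : Fin n, c a * c b *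
          (∑ ι ∈ Finset.univ.filter (P a), ∑ κ ∈ Finset.univ.filter (P b),
            ((tupleFact ι : ℝ) * (tupleFact κ : ℝ))⁻¹
              * ∏ r, incKernel k (σ a) (σ b) (ι r) (κ r))
          = ∑ ι ∈ Finset.univ.filter (P a), ∑ κ ∈ Finset.univ.filter (P b),
            (c a * (tupleFact ι : ℝ)⁻¹) * (c b * (tupleFact κ : ℝ)⁻¹)
              * ∏ r, incKernel k (σ a) (σ b) (ι r) (κ r) := by
        intro a b
        rw [Finset.mul_sum]
        refine Finset.sum_congr rfl fun ι _ => ?_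
        rw [Finset.mul_sum]
        refine Finset.sum_congr rfl fun κ _ => ?_
        rw [mul_inv]
        ring
      calc ∑ t, ∑ s, d t * d s * ∏ r, incKernel k (σ t.1) (σ s.1) (t.2.1 r) (s.2.1 r)
          = ∑ a, ∑ ι ∈ Finset.univ.filter (P a),
              ∑ s : T, (c a * (tupleFact ι : ℝ)⁻¹) * d s
                * ∏ r, incKernel k (σ a) (σ s.1) (ι r) (s.2.1 r) := by
            rw [sum_sigma_subtype P (fun a => Finset.univ.filter (P a))
              (fun a x => by simp) (fun a ι => ∑ s : T, (c a * (tupleFact ι : ℝ)⁻¹) * d s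
                * ∏ r, incKernel k (σ a) (σ s.1) (ι r) (s.2.1 r))]
        _ = ∑ a, ∑ ι ∈ Finset.univ.filter (P a), ∑ b, ∑ κ ∈ Finset.univ.filter (P b),
              (c a * (tupleFact ι : ℝ)⁻¹) * (c b * (tupleFact κ : ℝ)⁻¹)
                * ∏ r, incKernel k (σ a) (σ b) (ι r) (κ r) := by
            refine Finset.sum_congr rfl fun a _ => Finset.sum_congr rfl fun ι _ => ?_
            rw [sum_sigma_subtype P (fun b => Finset.univ.filter (P b))
              (fun b x => by simp) (fun b κ => (c a * (tupleFact ι : ℝ)⁻¹)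
                * (c b * (tupleFact κ : ℝ)⁻¹)
                * ∏ r, incKernel k (σ a) (σ b) (ι r) (κ r))]
        _ = ∑ a, ∑ b, ∑ ι ∈ Finset.univ.filter (P a), ∑ κ ∈ Finset.univ.filter (P b),
              (c a * (tupleFact ι : ℝ)⁻¹) * (c b * (tupleFact κ : ℝ)⁻¹)
                * ∏ r, incKernel k (σ a) (σ b) (ι r) (κ r) :=
            Finset.sum_congr rfl fun a _ => Finset.sum_comm
        _ = ∑ a, ∑ b, c a * c b *
              (∑ ι ∈ Finset.univ.filter (P a), ∑ κ ∈ Finset.univ.filter (P b),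
                ((tupleFact ι : ℝ) * (tupleFact κ : ℝ))⁻¹
                  * ∏ r, incKernel k (σ a) (σ b) (ι r) (κ r)) :=
            Finset.sum_congr rfl fun a _ => Finset.sum_congr rfl fun b _ =>
              (step1 a b).symm
    have expand : ∑ a, ∑ b, c a * c b * seqKernelHigher k D M (σ a) (σ b)
        = ∑ m ∈ Finset.range (M + 1), ∑ a, ∑ b, c a * c b *
            (∑ ι ∈ Finset.univ.filter (fun ι : Fin m → Fin (Len a) =>
                Monotone ι ∧ ∀ v, (Finset.univ.filter (fun r => ι r = v)).card ≤ D),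
              ∑ κ ∈ Finset.univ.filter (fun κ : Fin m → Fin (Len b) =>
                  Monotone κ ∧ ∀ v, (Finset.univ.filter (fun r => κ r = v)).card ≤ D),
                ((tupleFact ι : ℝ) * (tupleFact κ : ℝ))⁻¹
                  * ∏ r, incKernel k (σ a) (σ b) (ι r) (κ r)) := by
      have comm3 : ∀ (s : Finset ℕ) (f : Fin n → Fin n → ℕ → ℝ),
          ∑ a, ∑ b, ∑ m ∈ s, f a b m = ∑ m ∈ s, ∑ a, ∑ b, f a b m := by
        intro s f
        calc ∑ a, ∑ b, ∑ m ∈ s, f a b m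
            = ∑ a, ∑ m ∈ s, ∑ b, f a b m :=
              Finset.sum_congr rfl fun a _ => Finset.sum_comm
          _ = ∑ m ∈ s, ∑ a, ∑ b, f a b m := Finset.sum_comm
      unfold seqKernelHigher
      simp_rw [Finset.mul_sum]
      exact comm3 (Finset.range (M + 1)) _
    rw [expand]
    exact Finset.sum_nonneg fun m _ => hterm m
end
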